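/- arXiv:2008.07144 — 2 statements merged into one kernel-verified Lean document; each statement's English description precedes it below -/
import Mathlib

section
/- Structure of the cluster ordering: let [α_1,…,α_r] and [β_1,…,β_l] be clusters with [α_1,…,α_r] ≺ [β_1,…,β_l]. Then r ≤ l, and there exist an increasing sequence of integers 0 = h_0 < h_1 < ⋯ < h_r = l and integers κ_{i,j} ∈ ℤ such that, for every i = 1,…,r, α_i = β_{h_{i−1}+1}·q^{κ_{i,h_{i−1}+1}} + ⋯ + β_{h_i}·q^{κ_{i,h_i}} (as functions ℕ* → ℚ). -/
/- Clusters: `[α_1, …, α_r]` is the set of all `α_1 q^{d_1} + ⋯ + α_r q^{d_r}` with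
`d_1 > ⋯ > d_r ≥ 0`, where the `α_i : ℕ* → ℕ` are finitely supported and nonzero
(we model functions `ℕ* → ℕ` with finite support as `ℕ →₀ ℕ`). -/

noncomputable section

namespace PaperClusters

/-- The cluster `[α_1, …, α_r]` (here `α : Fin r → (ℕ →₀ ℕ)`(decreasingly indexed)). -/
def clusterSet (q : ℕ) {r : ℕ} (α : Fin r → (ℕ →₀ ℕ)) : Set (ℕ →₀ ℕ) :=
  {g | ∃ d : Fin r → ℕ, StrictAnti d ∧ g = ∑ i, q ^ (d i) • α i}

/-- A good sequence `(d_{1,m}, …, d_{r,m})_{m ≥ 0}`: each term is strictly decreasing,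
`d_{r,m} → ∞`, and `d_{i,m} − d_{i+1,m} → ∞` for every `i < r`. -/
def GoodSeq (r : ℕ) (D : ℕ → Fin r → ℕ) : Prop :=
  (∀ m, StrictAnti (D m)) ∧
  (∀ hr : 0 < r, Filter.Tendsto (fun m => D m ⟨r - 1, by omega⟩) Filter.atTop Filter.atTop) ∧
  (∀ i : ℕ, ∀ h : i + 1 < r,
    Filter.Tendsto (fun m => D m ⟨i, by omega⟩ - D m ⟨i + 1, h⟩) Filter.atTop Filter.atTop)

/-- The cluster ordering: `[α_1, …, α_r] ≺ [β_1, …, β_l]` iff there is a good sequence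
`(d_{1,m}, …, d_{r,m})` with `α_1 q^{d_{1,m}} + ⋯ + α_r q^{d_{r,m}} ∈ [β_1, …, β_l]`
for every `m`. -/
def Prec (q : ℕ) {r l : ℕ} (α : Fin r → (ℕ →₀ ℕ)) (β : Fin l → (ℕ →₀ ℕ)) : Prop :=
  ∃ D : ℕ → Fin r → ℕ, GoodSeq r D ∧
    ∀ m, (∑ i, q ^ (D m i) • α i) ∈ clusterSet q β

open Finset


variable {q : ℕ}

lemma geomBound (hq : 2 ≤ q) (n : ℕ) : ∑ s ∈ range n, q ^ s ≤ q ^ n - 1 := by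
  induction n with
  | zero => simp
  | succ n ih =>
    rw [Finset.sum_range_succ]
    have h1 : 1 ≤ q ^ n := Nat.one_le_pow _ _ (by omega)
    have h2 : q ^ (n+1) = q ^ n * q := pow_succ q n
    have h3 : q ^ n * 2 ≤ q ^ n * q := Nat.mul_le_mul_left _ hq
    omega

/-- Sum of `q^{e j} * b j` over distinct exponents `≤ T` with coefficients `< q^K`. -/
lemma sumBound (hq : 2 ≤ q) (K T : ℕ) {n : ℕ} (s : Finset (Fin n)) (e : Fin n → ℕ)
    (b : Fin n → ℕ) (he : Function.Injective e) (heT : ∀ j ∈ s, e j ≤ T)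
    (hb : ∀ j, b j < q ^ K) :
    ∑ j ∈ s, q ^ (e j) * b j < q ^ (T + K + 1) := by
  have h1 : ∑ j ∈ s, q ^ (e j) * b j ≤ ∑ j ∈ s, q ^ (e j) * (q ^ K - 1) :=
    Finset.sum_le_sum fun j _ => Nat.mul_le_mul_left _ (by have := hb j; omega)
  have h2 : ∑ j ∈ s, q ^ (e j) * (q ^ K - 1) = (∑ j ∈ s, q ^ (e j)) * (q ^ K - 1) := by
    rw [← Finset.sum_mul]
  have h3 : ∑ j ∈ s, q ^ (e j) = ∑ t ∈ s.image e, q ^ t :=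
    (Finset.sum_image (fun a _ c _ h => he h)).symm
  have h4 : s.image e ⊆ range (T + 1) := by
    intro t ht
    obtain ⟨j, hj, rfl⟩ := Finset.mem_image.mp ht
    exact Finset.mem_range.mpr (by have := heT j hj; omega)
  have h5 : ∑ t ∈ s.image e, q ^ t ≤ ∑ t ∈ range (T+1), q ^ t :=
    Finset.sum_le_sum_of_subset h4
  have h6 := geomBound hq (T+1)
  have h7 : 1 ≤ q ^ (T+1) := Nat.one_le_pow _ _ (by omega)
  have h8 : 1 ≤ q ^ K := Nat.one_le_pow _ _ (by omega)
  have h9 : (q ^ (T+1) - 1) * (q ^ K - 1) < q ^ (T+1) * q ^ K := by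
    calc (q ^ (T+1) - 1) * (q ^ K - 1) ≤ (q ^ (T+1) - 1) * q ^ K :=
          Nat.mul_le_mul_left _ (by omega)
      _ < q ^ (T+1) * q ^ K := by
          have hpos : 0 < q ^ K := Nat.pow_pos (by omega)
          exact Nat.mul_lt_mul_of_lt_of_le (by omega) le_rfl hpos
  have h10 : q ^ (T+1) * q ^ K = q ^ (T + K + 1) := by
    rw [← pow_add]; ring_nf
  calc ∑ j ∈ s, q ^ (e j) * b j ≤ (∑ j ∈ s, q ^ (e j)) * (q ^ K - 1) := h2 ▸ h1
    _ ≤ (q ^ (T+1) - 1) * (q ^ K - 1) :=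
        Nat.mul_le_mul_right _ (le_trans (h3 ▸ h5) h6)
    _ < q ^ (T + K + 1) := h10 ▸ h9

lemma modSplit (hq : 2 ≤ q) {n : ℕ} (e b : Fin n → ℕ) (u : ℕ) :
    (∑ j, q ^ (e j) * b j) % q ^ u
      = (∑ j ∈ univ.filter (fun j => e j < u), q ^ (e j) * b j) % q ^ u := by
  rw [← Finset.sum_filter_add_sum_filter_not univ (fun j => e j < u)]
  obtain ⟨c, hc⟩ : q ^ u ∣ ∑ j ∈ univ.filter (fun j => ¬ e j < u), q ^ (e j) * b j :=
    Finset.dvd_sum fun j hj => dvd_mul_of_dvd_left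
      (pow_dvd_pow q (not_lt.mp (Finset.mem_filter.mp hj).2)) _
  rw [hc, Nat.add_mul_mod_self_left]

/-- Upper window lemma: if no exponent lies in `[t - (K+2), u)`, then the digits of `N`
below `u` are bounded by `q^t`. -/
lemma windowUpper (hq : 2 ≤ q) (K : ℕ) {n : ℕ} (e b : Fin n → ℕ)
    (he : Function.Injective e) (hb : ∀ j, b j < q ^ K) (t u : ℕ)
    (hw : ∀ j, e j < u → e j + (K + 2) ≤ t) :
    (∑ j, q ^ (e j) * b j) % q ^ u < q ^ t := by
  rw [modSplit hq]
  set s := univ.filter (fun j : Fin n => e j < u) with hs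
  have hlt : ∑ j ∈ s, q ^ (e j) * b j < q ^ t := by
    rcases s.eq_empty_or_nonempty with h | ⟨j0, hj0⟩
    · rw [h, Finset.sum_empty]; exact Nat.pow_pos (by omega)
    · have ht : K + 2 ≤ t := by
        have := hw j0 (Finset.mem_filter.mp hj0).2; omega
      have := sumBound hq K (t - (K+2)) s e b he
        (fun j hj => by have := hw j (Finset.mem_filter.mp hj).2; omega) hb
      have heq : t - (K+2) + K + 1 = t - 1 := by omega
      rw [heq] at this
      calc ∑ j ∈ s, q ^ (e j) * b j < q ^ (t-1) := this
        _ ≤ q ^ t := Nat.pow_le_pow_right (by omega) (by omega)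
  exact lt_of_le_of_lt (Nat.mod_le _ _) hlt

/-- Lower window lemma: if `b j0 ≠ 0` and no exponent lies in `[u - (K+2), u)`,
then `N % q^u ≥ q^{e j0}`. -/
lemma windowLower (hq : 2 ≤ q) (K : ℕ) {n : ℕ} (e b : Fin n → ℕ)
    (he : Function.Injective e) (hb : ∀ j, b j < q ^ K) (j0 : Fin n)
    (hb0 : 1 ≤ b j0) (u : ℕ) (hu0 : e j0 < u)
    (hw : ∀ j, e j < u → e j + (K + 2) ≤ u) :
    q ^ (e j0) ≤ (∑ j, q ^ (e j) * b j) % q ^ u := by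
  rw [modSplit hq]
  set s := univ.filter (fun j : Fin n => e j < u) with hs
  have hj0 : j0 ∈ s := Finset.mem_filter.mpr ⟨Finset.mem_univ _, hu0⟩
  have hu2 : K + 2 ≤ u := by have := hw j0 hu0; omega
  have hss : ∑ j ∈ s, q ^ (e j) * b j < q ^ u := by
    have := sumBound hq K (u - (K+2)) s e b he
      (fun j hj => by have := hw j (Finset.mem_filter.mp hj).2; omega) hb
    have heq : u - (K+2) + K + 1 = u - 1 := by omega
    rw [heq] at this
    calc ∑ j ∈ s, q ^ (e j) * b j < q ^ (u-1) := this
      _ ≤ q ^ u := Nat.pow_le_pow_right (by omega) (by omega)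
  rw [Nat.mod_eq_of_lt hss]
  calc q ^ (e j0) ≤ q ^ (e j0) * b j0 := Nat.le_mul_of_pos_right _ hb0
    _ ≤ ∑ j ∈ s, q ^ (e j) * b j :=
        Finset.single_le_sum (f := fun j => q ^ (e j) * b j) (fun j _ => Nat.zero_le _) hj0

/-- Pigeonhole: there is a window of width `w` just above `v`, within `v + 1 + w*(n+1)`,
free of the exponents `e j`. -/
lemma pigeon {n : ℕ} (e : Fin n → ℕ) (v w : ℕ) (hw : 1 ≤ w) :
    ∃ u, v < u ∧ u ≤ v + 1 + w * (n + 1) ∧ ∀ j, e j < u → e j + w ≤ u := by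
  classical
  set f : Fin n → ℕ := fun j => (e j - (v+1)) / w with hf
  have hcard : (univ.image f).card ≤ n := le_trans Finset.card_image_le (by simp)
  have hns : ¬ (range (n+1) ⊆ univ.image f) := by
    intro hsub
    have := Finset.card_le_card hsub
    simp only [Finset.card_range] at this
    omega
  obtain ⟨s, hs, hsS⟩ := Finset.not_subset.mp hns
  have hsn : s < n + 1 := Finset.mem_range.mp hs
  refine ⟨v + 1 + w * s + w, by omega, ?_, ?_⟩
  · have e1 : w * s + w = w * (s+1) := by ring
    have e2 : w * (s+1) ≤ w * (n+1) := Nat.mul_le_mul_left _ (by omega)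
    omega
  · intro j hj
    by_contra hcon
    push_neg at hcon
    have hjv : v + 1 ≤ e j := by omega
    have h1 : s * w ≤ e j - (v+1) := by
      have e1 : s * w = w * s := by ring
      omega
    have h2 : e j - (v+1) < (s+1) * w := by
      have e1 : (s+1) * w = w * s + w := by ring
      omega
    have : f j = s := Nat.div_eq_of_lt_le h1 h2
    exact hsS (Finset.mem_image.mpr ⟨j, Finset.mem_univ _, this⟩)

/-- Vanishing of separated integer combinations. -/
lemma intVanish (hq : 2 ≤ q) {r : ℕ} (d : Fin r → ℕ) (hd : StrictAnti d)
    (B G : ℕ) (hG : B + 1 ≤ G)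
    (hgap : ∀ i : Fin r, ∀ h : (i : ℕ) + 1 < r, d ⟨(i:ℕ)+1, h⟩ + G ≤ d i)
    (z : Fin r → ℤ) (hz : ∀ i, (z i).natAbs < q ^ B)
    (hsum : ∑ i, (q : ℤ) ^ (d i) * z i = 0) : ∀ i, z i = 0 := by
  classical
  suffices H : ∀ k : ℕ, ∀ i : Fin r, (i : ℕ) = k → z i = 0 by
    intro i; exact H i i rfl
  intro k
  induction k using Nat.strong_induction_on with
  | _ k IH =>
    intro i hik
    -- split the sum
    have hsplit : (q:ℤ) ^ (d i) * z i
        + ∑ i' ∈ (univ.erase i).filter (fun i' => i' < i), (q:ℤ) ^ (d i') * z i'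
        + ∑ i' ∈ (univ.erase i).filter (fun i' => ¬ i' < i), (q:ℤ) ^ (d i') * z i' = 0 := by
      rw [add_assoc, Finset.sum_filter_add_sum_filter_not,
        Finset.add_sum_erase _ (fun i' => (q:ℤ) ^ (d i') * z i') (Finset.mem_univ i)]
      exact hsum
    have hz1 : ∑ i' ∈ (univ.erase i).filter (fun i' => i' < i), (q:ℤ) ^ (d i') * z i' = 0 := by
      apply Finset.sum_eq_zero
      intro i' hi'
      have : i' < i := (Finset.mem_filter.mp hi').2
      have hlt : ((i' : ℕ)) < k := by
        have := (Fin.lt_def.mp this); omega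
      rw [IH (i' : ℕ) hlt i' rfl]
      ring
    by_cases hcase : (i : ℕ) + 1 < r
    · set i1 : Fin r := ⟨(i:ℕ)+1, hcase⟩ with hi1
      have htail : ((∑ i' ∈ (univ.erase i).filter (fun i' => ¬ i' < i) \ {i},
          (0:ℤ))).natAbs = 0 := by simp
      -- bound the tail sum
      have htb : (∑ i' ∈ (univ.erase i).filter (fun i' => ¬ i' < i),
          (q:ℤ) ^ (d i') * z i').natAbs < q ^ (d i1 + B + 1) := by
        calc (∑ i' ∈ (univ.erase i).filter (fun i' => ¬ i' < i),
              (q:ℤ) ^ (d i') * z i').natAbs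
            ≤ ∑ i' ∈ (univ.erase i).filter (fun i' => ¬ i' < i),
              ((q:ℤ) ^ (d i') * z i').natAbs := nat_abs_sum_le _ _
          _ = ∑ i' ∈ (univ.erase i).filter (fun i' => ¬ i' < i),
              q ^ (d i') * (z i').natAbs := by
              apply Finset.sum_congr rfl
              intro i' _
              rw [Int.natAbs_mul]
              congr 1
          _ < q ^ (d i1 + B + 1) := by
              apply sumBound hq B (d i1) _ d _ hd.injective _ hz
              intro i' hi'
              have h1 : i ≠ i' := (Finset.mem_erase.mp (Finset.mem_filter.mp hi').1).1.symm
              have h2 : ¬ i' < i := (Finset.mem_filter.mp hi').2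
              have h3 : i < i' := lt_of_le_of_ne (not_lt.mp h2) h1
              have h4 : i1 ≤ i' := by
                rw [Fin.le_def]
                have := Fin.lt_def.mp h3
                simp [hi1]
                omega
              exact hd.antitone h4
      have hgapi : d i1 + G ≤ d i := hgap i hcase
      have hzero : ((q:ℤ) ^ (d i) * z i).natAbs < q ^ (d i) := by
        have heq : (q:ℤ) ^ (d i) * z i
            = - ∑ i' ∈ (univ.erase i).filter (fun i' => ¬ i' < i), (q:ℤ) ^ (d i') * z i' := by
          rw [hz1] at hsplit
          linarith [hsplit]
        rw [heq, Int.natAbs_neg]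
        calc (∑ i' ∈ (univ.erase i).filter (fun i' => ¬ i' < i),
              (q:ℤ) ^ (d i') * z i').natAbs < q ^ (d i1 + B + 1) := htb
          _ ≤ q ^ (d i) := Nat.pow_le_pow_right (by omega) (by omega)
      have : ((q:ℤ) ^ (d i)).natAbs * (z i).natAbs < q ^ (d i) := by
        rw [← Int.natAbs_mul]; exact hzero
      have hq1 : ((q:ℤ) ^ (d i)).natAbs = q ^ (d i) := by
        rw [Int.natAbs_pow]; simp
      rw [hq1] at this
      have hp : 0 < q ^ (d i) := Nat.pow_pos (by omega)
      have : (z i).natAbs = 0 := by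
        by_contra hne
        have : 1 ≤ (z i).natAbs := by omega
        nlinarith
      omega
    · -- i is the last index: the tail is empty
      have hempty : (univ.erase i).filter (fun i' => ¬ i' < i) = ∅ := by
        apply Finset.filter_eq_empty_iff.mpr
        intro i' hi'
        have h1 : i ≠ i' := (Finset.mem_erase.mp hi').1.symm
        by_contra h2
        have h3 : i < i' := lt_of_le_of_ne (not_lt.mp h2) h1
        have := Fin.lt_def.mp h3
        have := i'.isLt
        omega
      rw [hz1, hempty] at hsplit
      simp at hsplit
      rcases hsplit with h | h
      · exfalso
        have : (0:ℤ) < (q:ℤ) ^ (d i) := by positivity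
        omega
      · exact h


set_option maxHeartbeats 1000000 in
/-- **Structure of the cluster ordering.**  If `[α_1, …, α_r] ≺ [β_1, …, β_l]` (for `q = p^e`
a prime power), then `r ≤ l` and there are `0 = h_0 < h_1 < ⋯ < h_r = l` and integers
`κ_{i,j}` such that `α_i = β_{h_{i−1}+1} q^{κ_{i,h_{i−1}+1}} + ⋯ + β_{h_i} q^{κ_{i,h_i}}`
(as functions with values in `ℚ`), for every `i = 1, …, r`. -/
theorem cluster_ordering_structure
    (q p e : ℕ) (hp : p.Prime) (he : 0 < e) (hq : q = p ^ e)
    (r l : ℕ) (hr : 0 < r) (hl : 0 < l)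
    (α : Fin r → (ℕ →₀ ℕ)) (β : Fin l → (ℕ →₀ ℕ))
    (hα : ∀ i, α i ≠ 0) (hβ : ∀ i, β i ≠ 0)
    (hprec : Prec q α β) :
    r ≤ l ∧ ∃ h : Fin (r + 1) → ℕ, h 0 = 0 ∧ h (Fin.last r) = l ∧ StrictMono h ∧
      ∃ κ : Fin r → Fin l → ℤ, ∀ i : Fin r, ∀ x : ℕ,
        ((α i x : ℚ)) = ∑ j : Fin l,
          (if h i.castSucc ≤ (j : ℕ) ∧ (j : ℕ) < h i.succ then
            (q : ℚ) ^ (κ i j) * (β j x : ℚ) else 0) := by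
  classical
  have hq2 : 2 ≤ q := by
    have h1 : 2 ≤ p := hp.two_le
    have h2 : p ≤ p ^ e := Nat.le_self_pow (by omega) p
    omega
  obtain ⟨D, ⟨hDanti, hDbot, hDgap⟩, hmem⟩ := hprec
  choose E hEanti hEeq using hmem
  -- bound all the values of the `α i` and `β j`
  set A : ℕ := max (univ.sup fun i => ((α i).support.sup (α i)))
      (univ.sup fun j => ((β j).support.sup (β j))) with hA
  set K : ℕ := A + 1 with hK
  have hval : ∀ (f : ℕ →₀ ℕ) (x : ℕ), f x ≤ f.support.sup f := by
    intro f x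
    by_cases hx : x ∈ f.support
    · exact Finset.le_sup hx
    · simp [Finsupp.notMem_support_iff.mp hx]
  have hKq : K < q ^ K := Nat.lt_pow_self (by omega : 1 < q)
  have hKα : ∀ i x, α i x < q ^ K := by
    intro i x
    have h1 : α i x ≤ (α i).support.sup (α i) := hval _ _
    have h2 : ((α i).support.sup (α i)) ≤ univ.sup fun i => ((α i).support.sup (α i)) :=
      Finset.le_sup (f := fun i => ((α i).support.sup (α i))) (Finset.mem_univ i)
    omega
  have hKβ : ∀ j x, β j x < q ^ K := by
    intro j x
    have h1 : β j x ≤ (β j).support.sup (β j) := hval _ _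
    have h2 : ((β j).support.sup (β j)) ≤ univ.sup fun j => ((β j).support.sup (β j)) :=
      Finset.le_sup (f := fun j => ((β j).support.sup (β j))) (Finset.mem_univ j)
    omega
  -- constants
  set C1 : ℕ := (K+2) * (l+2) with hC1
  set B' : ℕ := C1 + 2*K + l + 3 with hB'
  set G : ℕ := B' + 2*C1 + K + 12 with hG
  have hC1w : K + 2 ≤ C1 := Nat.le_mul_of_pos_right _ (by omega)
  have hC1a : 1 + (K+2) * (l+1) ≤ C1 := by
    have h1 : (K+2) * (l+2) = (K+2)*(l+1) + (K+2) := by ring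
    omega
  -- pick a stage with huge gaps
  have hev : ∀ᶠ m in Filter.atTop, ∀ i : Fin r, ∀ hi : (i:ℕ)+1 < r,
      D m ⟨(i:ℕ)+1, hi⟩ + G ≤ D m i := by
    rw [Filter.eventually_all]
    intro i
    by_cases hi : (i:ℕ)+1 < r
    · have h1 := (hDgap (i:ℕ) hi).eventually_ge_atTop G
      filter_upwards [h1] with m hm hi'
      have hlt : (⟨(i:ℕ), by omega⟩ : Fin r) < ⟨(i:ℕ)+1, hi⟩ := by
        simp [Fin.lt_def]
      have h2 := hDanti m hlt
      have h3 : (⟨(i:ℕ), by omega⟩ : Fin r) = i := by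
        apply Fin.ext; rfl
      rw [h3] at hm h2
      omega
    · filter_upwards with m hi'
      exact absurd hi' hi
  obtain ⟨m0, hgap0⟩ := hev.exists
  set D0 : Fin r → ℕ := D m0 with hD0
  set E0 : Fin l → ℕ := E m0 with hE0
  have hD0anti : StrictAnti D0 := hDanti m0
  have hE0anti : StrictAnti E0 := hEanti m0
  have heqx : ∀ x, ∑ i, q ^ (D0 i) * α i x = ∑ j, q ^ (E0 j) * β j x := by
    intro x
    have h := congrArg (fun f : ℕ →₀ ℕ => f x) (hEeq m0)
    simpa [Finsupp.finset_sum_apply, Finsupp.smul_apply, smul_eq_mul] using h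
  have hsep : ∀ i i' : Fin r, i < i' → D0 i' + G ≤ D0 i := by
    intro i i' hii'
    have hlt : (i:ℕ) + 1 < r := by
      have := Fin.lt_def.mp hii'
      have := i'.isLt
      omega
    have h1 := hgap0 i hlt
    have h2 : D0 i' ≤ D0 ⟨(i:ℕ)+1, hlt⟩ := by
      apply hD0anti.antitone
      rw [Fin.le_def]
      exact Fin.lt_def.mp hii'
    omega
  -- matching: every E0-exponent is near a D0-exponent
  have hβx : ∀ j : Fin l, ∃ x, β j x ≠ 0 := by
    intro j
    have := hβ j
    rw [Finsupp.ne_iff] at this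
    simpa using this
  have hαx : ∀ i : Fin r, ∃ x, α i x ≠ 0 := by
    intro i
    have := hα i
    rw [Finsupp.ne_iff] at this
    simpa using this
  have step1 : ∀ j : Fin l, ∃ i : Fin r, E0 j ≤ D0 i + (K+2) ∧ D0 i ≤ E0 j + C1 := by
    intro j
    obtain ⟨x, hx⟩ := hβx j
    obtain ⟨u, hu1, hu2, hu3⟩ := pigeon E0 (E0 j) (K+2) (by omega)
    have hlow : q ^ (E0 j) ≤ (∑ j', q ^ (E0 j') * β j' x) % q ^ u :=
      windowLower hq2 K E0 (fun j' => β j' x) hE0anti.injective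
        (fun j' => hKβ j' x) j (Nat.one_le_iff_ne_zero.mpr hx) u hu1 hu3
    rw [← heqx x] at hlow
    by_contra hcon
    push_neg at hcon
    have hw : ∀ i : Fin r, D0 i < u → D0 i + (K + 2) ≤ E0 j := by
      intro i hiu
      rcases le_or_gt (E0 j) (D0 i + (K+2)) with h | h
      · exfalso
        have := hcon i h
        omega
      · omega
    have hup : (∑ i', q ^ (D0 i') * α i' x) % q ^ u < q ^ (E0 j) :=
      windowUpper hq2 K D0 (fun i => α i x) hD0anti.injective
        (fun i => hKα i x) (E0 j) u hw
    omega
  choose σ hσ1 hσ2 using step1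
  have huniq : ∀ (j : Fin l) (i : Fin r), E0 j ≤ D0 i + C1 → D0 i ≤ E0 j + C1 → i = σ j := by
    intro j i h1 h2
    by_contra hne
    rcases lt_or_gt_of_ne hne with h | h
    · have h3 := hsep i (σ j) h
      have h4 := hσ1 j
      omega
    · have h3 := hsep (σ j) i h
      have h4 := hσ2 j
      omega
  have hmono : Monotone σ := by
    intro j j' hjj'
    by_contra hcon
    push_neg at hcon
    have h1 := hsep (σ j') (σ j) hcon
    have h2 := hσ2 j'
    have h3 : E0 j' ≤ E0 j := hE0anti.antitone hjj'
    have h4 := hσ1 j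
    omega
  have hsurj : ∀ i : Fin r, ∃ j : Fin l, σ j = i := by
    intro i
    obtain ⟨x, hx⟩ := hαx i
    set u : ℕ := D0 i + (K+2) + 1 with hu
    have hwD : ∀ i' : Fin r, D0 i' < u → D0 i' + (K+2) ≤ u := by
      intro i' hiu
      rcases lt_trichotomy i' i with h | h | h
      · exfalso
        have := hsep i' i h
        omega
      · rw [h]; omega
      · have : D0 i' ≤ D0 i := (hD0anti h).le
        omega
    have hlow : q ^ (D0 i) ≤ (∑ i', q ^ (D0 i') * α i' x) % q ^ u :=
      windowLower hq2 K D0 (fun i' => α i' x) hD0anti.injective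
        (fun i' => hKα i' x) i (Nat.one_le_iff_ne_zero.mpr hx) u (by omega) hwD
    rw [heqx x] at hlow
    by_contra hcon
    push_neg at hcon
    have hw : ∀ j : Fin l, E0 j < u → E0 j + (K + 2) ≤ D0 i := by
      intro j hju
      rcases le_or_gt (E0 j + (K+2)) (D0 i) with h | h
      · exact h
      · exfalso
        exact hcon j (huniq j i (by omega) (by omega)).symm
    have hup : (∑ j', q ^ (E0 j') * β j' x) % q ^ u < q ^ (D0 i) :=
      windowUpper hq2 K E0 (fun j => β j x) hE0anti.injective
        (fun j => hKβ j x) (D0 i) u hw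
    omega
  have hrl : r ≤ l := by
    have h1 : Function.Surjective σ := fun i => hsurj i
    have h2 := Fintype.card_le_of_surjective σ h1
    simpa using h2
  -- offsets
  set t : Fin l → ℕ := fun j => E0 j + C1 - D0 (σ j) with ht
  have htadd : ∀ j, D0 (σ j) + t j = E0 j + C1 := by
    intro j
    have := hσ2 j
    simp only [ht]
    omega
  have htub : ∀ j, t j ≤ C1 + (K+2) := by
    intro j
    have h1 := hσ1 j
    have h2 := hσ2 j
    simp only [ht]
    omega
  -- the key per-point identity
  have hkey : ∀ (x : ℕ) (i : Fin r),
      q ^ C1 * α i x = ∑ j ∈ univ.filter (fun j => σ j = i), q ^ (t j) * β j x := by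
    intro x i
    have hnat : ∑ i', q ^ (D0 i') * (q ^ C1 * α i' x)
        = ∑ i', q ^ (D0 i') * (∑ j ∈ univ.filter (fun j => σ j = i'), q ^ (t j) * β j x) := by
      calc ∑ i', q ^ (D0 i') * (q ^ C1 * α i' x)
          = q ^ C1 * ∑ i', q ^ (D0 i') * α i' x := by
            rw [Finset.mul_sum]; apply Finset.sum_congr rfl; intro i' _; ring
        _ = q ^ C1 * ∑ j, q ^ (E0 j) * β j x := by rw [heqx x]
        _ = ∑ j, q ^ (D0 (σ j)) * (q ^ (t j) * β j x) := by
            rw [Finset.mul_sum]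
            apply Finset.sum_congr rfl
            intro j _
            have h1 : q ^ (D0 (σ j)) * q ^ (t j) = q ^ (E0 j) * q ^ C1 := by
              rw [← pow_add, ← pow_add, htadd j]
            calc q ^ C1 * (q ^ (E0 j) * β j x) = (q ^ (E0 j) * q ^ C1) * β j x := by ring
              _ = (q ^ (D0 (σ j)) * q ^ (t j)) * β j x := by rw [h1]
              _ = q ^ (D0 (σ j)) * (q ^ (t j) * β j x) := by ring
        _ = ∑ i', ∑ j ∈ univ.filter (fun j => σ j = i'),
              q ^ (D0 (σ j)) * (q ^ (t j) * β j x) :=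
            (Finset.sum_fiberwise univ σ _).symm
        _ = ∑ i', q ^ (D0 i') * (∑ j ∈ univ.filter (fun j => σ j = i'), q ^ (t j) * β j x) := by
            apply Finset.sum_congr rfl
            intro i' _
            rw [Finset.mul_sum]
            apply Finset.sum_congr rfl
            intro j hj
            rw [(Finset.mem_filter.mp hj).2]
    -- move to ℤ and apply the vanishing lemma
    set S : Fin r → ℕ := fun i' => ∑ j ∈ univ.filter (fun j => σ j = i'), q ^ (t j) * β j x
      with hS
    set z : Fin r → ℤ := fun i' => (q ^ C1 * α i' x : ℕ) - (S i' : ℕ) with hz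
    have hzsum : ∑ i', (q:ℤ) ^ (D0 i') * z i' = 0 := by
      have h1 : ∑ i', (q:ℤ) ^ (D0 i') * z i'
          = (∑ i', (q:ℤ) ^ (D0 i') * ((q ^ C1 * α i' x : ℕ) : ℤ))
            - ∑ i', (q:ℤ) ^ (D0 i') * ((S i' : ℕ) : ℤ) := by
        rw [← Finset.sum_sub_distrib]
        apply Finset.sum_congr rfl
        intro i' _
        simp only [hz]
        ring
      rw [h1, sub_eq_zero]
      have h2 : ((∑ i', q ^ (D0 i') * (q ^ C1 * α i' x) : ℕ) : ℤ)
          = ((∑ i', q ^ (D0 i') * S i' : ℕ) : ℤ) := by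
        exact_mod_cast hnat
      push_cast at h2
      convert h2 using 2 <;> norm_num
    have hzb : ∀ i', (z i').natAbs < q ^ B' := by
      intro i'
      have ha : q ^ C1 * α i' x < q ^ (C1 + K) := by
        rw [pow_add]
        exact mul_lt_mul_of_pos_left (hKα i' x) (by positivity)
      have hterm : ∀ j ∈ univ.filter (fun j => σ j = i'),
          q ^ (t j) * β j x ≤ q ^ (C1 + 2*K + 2) := by
        intro j _
        have h1 : q ^ (t j) ≤ q ^ (C1 + K + 2) :=
          Nat.pow_le_pow_right (by omega) (by have := htub j; omega)
        have h2 : β j x ≤ q ^ K := (hKβ j x).le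
        calc q ^ (t j) * β j x ≤ q ^ (C1 + K + 2) * q ^ K := Nat.mul_le_mul h1 h2
          _ = q ^ (C1 + 2*K + 2) := by rw [← pow_add]; ring_nf
      have hcard : (univ.filter (fun j => σ j = i')).card ≤ l := by
        calc (univ.filter (fun j => σ j = i')).card ≤ (univ : Finset (Fin l)).card :=
            Finset.card_le_card (Finset.filter_subset _ _)
          _ = l := by simp
      have hSb : S i' < q ^ B' := by
        calc S i' ≤ (univ.filter (fun j => σ j = i')).card * q ^ (C1 + 2*K + 2) := by
              simpa using Finset.sum_le_card_nsmul _ _ _ hterm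
          _ ≤ l * q ^ (C1 + 2*K + 2) := Nat.mul_le_mul_right _ hcard
          _ < q ^ (l+1) * q ^ (C1 + 2*K + 2) := by
              apply Nat.mul_lt_mul_of_lt_of_le _ le_rfl (by positivity)
              calc l < 2 ^ l := Nat.lt_two_pow_self
                _ ≤ q ^ l := Nat.pow_le_pow_left hq2 l
                _ ≤ q ^ (l+1) := Nat.pow_le_pow_right (by omega) (by omega)
          _ = q ^ B' := by rw [← pow_add]; congr 1; simp only [hB']; ring
      have haB : q ^ (C1 + K) ≤ q ^ B' :=
        Nat.pow_le_pow_right (by omega) (by simp only [hB']; omega)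
      simp only [hz]
      omega
    have := intVanish hq2 D0 hD0anti B' G (by simp only [hG]; omega) hgap0 z hzb hzsum i
    simp only [hz, sub_eq_zero] at this
    exact_mod_cast this
  -- build the block endpoints
  set hfun : Fin (r+1) → ℕ :=
    fun i => (univ.filter fun j : Fin l => (σ j : ℕ) < (i : ℕ)).card with hhfun
  have hiff : ∀ (c : ℕ) (j : Fin l),
      (j : ℕ) < (univ.filter fun j' : Fin l => (σ j' : ℕ) < c).card ↔ (σ j : ℕ) < c := by
    intro c j
    constructor
    · intro hjc
      by_contra hge
      push_neg at hge
      have hsub : (univ.filter fun j' : Fin l => (σ j' : ℕ) < c) ⊆ Finset.Iio j := by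
        intro j' hj'
        have h1 : (σ j' : ℕ) < c := (Finset.mem_filter.mp hj').2
        rw [Finset.mem_Iio]
        by_contra h2
        push_neg at h2
        have := hmono h2
        rw [Fin.le_def] at this
        omega
      have := Finset.card_le_card hsub
      rw [Fin.card_Iio] at this
      omega
    · intro hc
      have hsub : Finset.Iic j ⊆ (univ.filter fun j' : Fin l => (σ j' : ℕ) < c) := by
        intro j' hj'
        rw [Finset.mem_Iic] at hj'
        refine Finset.mem_filter.mpr ⟨Finset.mem_univ _, ?_⟩
        have := hmono hj'
        rw [Fin.le_def] at this
        omega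
      have := Finset.card_le_card hsub
      rw [Fin.card_Iic] at this
      omega
  refine ⟨hrl, hfun, ?_, ?_, ?_, ?_⟩
  · simp [hhfun]
  · simp only [hhfun]
    rw [Finset.filter_true_of_mem, Finset.card_univ, Fintype.card_fin]
    intro j _
    simp only [Fin.val_last]
    exact (σ j).isLt
  · rw [Fin.strictMono_iff_lt_succ]
    intro i
    apply Finset.card_lt_card
    rw [Finset.ssubset_iff_of_subset]
    · obtain ⟨j, hj⟩ := hsurj i
      refine ⟨j, Finset.mem_filter.mpr ⟨Finset.mem_univ _, ?_⟩, fun hmem => ?_⟩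
      · rw [hj, Fin.val_succ]
        omega
      · have := (Finset.mem_filter.mp hmem).2
        rw [hj, Fin.coe_castSucc] at this
        omega
    · intro j' hj'
      refine Finset.mem_filter.mpr ⟨Finset.mem_univ _, ?_⟩
      have := (Finset.mem_filter.mp hj').2
      rw [Fin.coe_castSucc] at this
      rw [Fin.val_succ]
      omega
  · refine ⟨fun _ j => (t j : ℤ) - (C1 : ℤ), ?_⟩
    intro i x
    have hcond : ∀ j : Fin l,
        (hfun i.castSucc ≤ (j : ℕ) ∧ (j : ℕ) < hfun i.succ) ↔ σ j = i := by
      intro j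
      simp only [hhfun]
      rw [← not_lt (a := (j:ℕ)) (b := hfun i.castSucc)]
      rw [hiff ((i.castSucc : ℕ)) j, hiff ((i.succ : ℕ)) j]
      rw [Fin.coe_castSucc, Fin.val_succ]
      constructor
      · intro ⟨h1, h2⟩
        apply Fin.ext
        omega
      · intro hσ
        rw [hσ]
        omega
    have hq0 : (q : ℚ) ≠ 0 := by positivity
    have hcast : (q:ℚ) ^ C1 * (α i x : ℚ)
        = ∑ j ∈ univ.filter (fun j => σ j = i), (q:ℚ) ^ (t j) * (β j x : ℚ) := by
      have := hkey x i
      have h2 : ((q ^ C1 * α i x : ℕ) : ℚ)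
          = ((∑ j ∈ univ.filter (fun j => σ j = i), q ^ (t j) * β j x : ℕ) : ℚ) := by
        exact_mod_cast this
      push_cast at h2
      exact h2
    calc (α i x : ℚ)
        = ∑ j ∈ univ.filter (fun j => σ j = i), (q:ℚ) ^ ((t j : ℤ) - (C1:ℤ)) * (β j x : ℚ) := by
          have hper : ∀ j ∈ univ.filter (fun j => σ j = i),
              (q:ℚ) ^ ((t j : ℤ) - (C1:ℤ)) * (β j x : ℚ)
                = ((q:ℚ) ^ (t j) * (β j x : ℚ)) * ((q:ℚ) ^ C1)⁻¹ := by
            intro j _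
            rw [zpow_sub₀ hq0, zpow_natCast, zpow_natCast, div_eq_mul_inv]
            ring
          rw [Finset.sum_congr rfl hper, ← Finset.sum_mul, ← hcast]
          field_simp
      _ = ∑ j : Fin l, (if hfun i.castSucc ≤ (j : ℕ) ∧ (j : ℕ) < hfun i.succ then
            (q : ℚ) ^ ((t j : ℤ) - (C1:ℤ)) * (β j x : ℚ) else 0) := by
          rw [Finset.sum_filter]
          apply Finset.sum_congr rfl
          intro j _
          rw [eq_comm]
          by_cases hc : σ j = i
          · rw [if_pos hc, if_pos ((hcond j).mpr hc)]
          · rw [if_neg hc, if_neg (fun hcc => hc ((hcond j).mp hcc))]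


end PaperClusters
end
end

section
/- Let U be a finite subset of ℕ* with |U| < q. Then for every d ≥ 0 the identity ∑_{a ∈ A⁺, deg a = d} (∏_{i∈U} a(t_i)) / a = (∏_{i∈U} b_d(t_i)) / l_d holds in K[t_i : i ∈ U]. -/
/- Setting: `Fq` is the finite field with `q` elements, `A = Fq[θ]` (`θ = Polynomial.X`),
`A⁺` the monic polynomials (parametrized by their lower-order coefficients),
`K = Fq(θ) = RatFunc Fq`, and `K∞ = Fq((1/θ)) = FunctionField.FqtInfty Fq`,
the completion of `K` at the place at infinity, with its valuation topology. -/

open scoped Classical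

noncomputable section

namespace PaperMZV

variable (Fq : Type) [Field Fq] [Fintype Fq]

/-- The monic polynomial of degree `d` with lower-order coefficients `c`; as `c` runs through
`Fin d → Fq` this enumerates the monic elements of `A` of degree `d`. -/
def monicPoly (d : ℕ) (c : Fin d → Fq) : Polynomial Fq :=
  Polynomial.X ^ d + ∑ i : Fin d, Polynomial.C (c i) * Polynomial.X ^ (i : ℕ)

/-- The embedding `A = Fq[θ] → K = Fq(θ)`. -/
def AtoK : Polynomial Fq →+* RatFunc Fq := algebraMap _ _

/-- The power sum `S_d(n) = ∑_{a ∈ A⁺, deg a = d} a^{-n} ∈ K`. -/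
def Sval (n : ℤ) (d : ℕ) : RatFunc Fq :=
  ∑ c : Fin d → Fq, (AtoK Fq (monicPoly Fq d c)) ^ (-n)

/-- `a(t_i)`: the image of `a ∈ Fq[θ]` under the `Fq`-algebra map `θ ↦ t_i`. -/
def atT (i : ℕ) (a : Polynomial Fq) : MvPolynomial ℕ (RatFunc Fq) :=
  Polynomial.aeval (MvPolynomial.X i) a

/-- `χ_Σ(a) = ∏_i a(t_i)^{Σ(i)}` for a finite weighted subset `Σ : ℕ →₀ ℕ`. -/
def chi (s : ℕ →₀ ℕ) (a : Polynomial Fq) : MvPolynomial ℕ (RatFunc Fq) :=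
  s.prod fun i k => (atT Fq i a) ^ k

/-- The twisted power sum `∑_{a ∈ A⁺, deg a = d} χ_Σ(a)/a^n ∈ K[t]`. -/
def powS (s : ℕ →₀ ℕ) (n : ℤ) (d : ℕ) : MvPolynomial ℕ (RatFunc Fq) :=
  ∑ c : Fin d → Fq,
    chi Fq s (monicPoly Fq d c) * MvPolynomial.C ((AtoK Fq (monicPoly Fq d c)) ^ (-n))

/-- Composition arrays: finite sequences of pairs (finite weighted subset `Σ_i`, integer `n_i`). -/
abbrev CompArray : Type := List ((ℕ →₀ ℕ) × ℤ)

/-- The weight `n_1 + ⋯ + n_r` of a composition array. -/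
def weight (C : CompArray) : ℤ := (C.map Prod.snd).sum

/-- The type `Σ_1 ⋯ Σ_r` (pointwise sum) of a composition array. -/
def ctype (C : CompArray) : ℕ →₀ ℕ := (C.map Prod.fst).sum

/-- A composition array is admissible if all `n_i ≥ 1`. -/
def Admissible (C : CompArray) : Prop := ∀ x ∈ C, 1 ≤ x.2

/-- Auxiliary truncated multiple sum: `SltAux C d = ∑_{d > d_1 > ⋯ > d_r ≥ 0} ∏ S_{d_i}`-terms
(equal to `1` on the empty array, for every `d`). -/
def SltAux : CompArray → ℕ → MvPolynomial ℕ (RatFunc Fq)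
  | [], _ => 1
  | (s, n) :: rest, d => ∑ e ∈ Finset.range d, powS Fq s n e * SltAux rest e

/-- The multiple twisted power sum
`S_d(C) = ∑_{d = d_1 > ⋯ > d_r ≥ 0} ∑ χ_{Σ_1}(a_1)⋯χ_{Σ_r}(a_r)/(a_1^{n_1}⋯a_r^{n_r})`. -/
def Sd : CompArray → ℕ → MvPolynomial ℕ (RatFunc Fq)
  | [], d => if d = 0 then 1 else 0
  | (s, n) :: rest, d => powS Fq s n d * SltAux Fq rest d

/-- `S_{<d}(C) = ∑_{0 ≤ j < d} S_j(C)`. -/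
def Slt (C : CompArray) (d : ℕ) : MvPolynomial ℕ (RatFunc Fq) :=
  ∑ j ∈ Finset.range d, Sd Fq C j

/-- The embedding of `K` into its completion `K∞ = Fq((1/θ))` at the infinite place. -/
def KtoKinf : RatFunc Fq →+* RatFunc.CompletionAtInfty Fq := by
  letI := RatFunc.inftyValued Fq
  exact UniformSpace.Completion.coeRingHom

/-- The multiple zeta value `ζ_A(C) = ∑_{d ≥ 0} S_d(C)`, a formal power series in the `t_i`
over `K∞`, each coefficient being a (convergent) sum in `K∞`. -/
def zeta (C : CompArray) : MvPowerSeries ℕ (RatFunc.CompletionAtInfty Fq) :=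
  fun m => ∑' d : ℕ, KtoKinf Fq (MvPolynomial.coeff m (Sd Fq C d))

/-- The image of a polynomial in the `t_i` over `K` inside formal power series over `K∞`. -/
def toPS (P : MvPolynomial ℕ (RatFunc Fq)) : MvPowerSeries ℕ (RatFunc.CompletionAtInfty Fq) :=
  fun m => KtoKinf Fq (MvPolynomial.coeff m P)

/-- `b_i(t_v) = (t_v − θ)(t_v − θ^q)⋯(t_v − θ^{q^{i−1}})`. -/
def bMv (i : ℕ) (v : ℕ) : MvPolynomial ℕ (RatFunc Fq) :=
  ∏ k ∈ Finset.range i, (MvPolynomial.X v - MvPolynomial.C (RatFunc.X ^ (Fintype.card Fq) ^ k))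

/-- `l_i = (θ − θ^q)⋯(θ − θ^{q^i})`. -/
def lel (i : ℕ) : RatFunc Fq :=
  ∏ k ∈ Finset.range i, (RatFunc.X - RatFunc.X ^ (Fintype.card Fq) ^ (k + 1))

/-- `D_i = (θ^{q^i} − θ^{q^{i−1}})⋯(θ^{q^i} − θ)`. -/
def Del (i : ℕ) : RatFunc Fq :=
  ∏ k ∈ Finset.range i, (RatFunc.X ^ (Fintype.card Fq) ^ i - RatFunc.X ^ (Fintype.card Fq) ^ k)

/-- The monomial `∏_i X_i^{Σ(i)·q^d}`. -/
def monomX (s : ℕ →₀ ℕ) (d : ℕ) : MvPolynomial ℕ (RatFunc Fq) :=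
  s.prod fun i k => (MvPolynomial.X i) ^ (k * (Fintype.card Fq) ^ d)

/-- Auxiliary truncated multiple polylogarithm sum. -/
def lamAux : CompArray → ℕ → MvPolynomial ℕ (RatFunc Fq)
  | [], _ => 1
  | (s, n) :: rest, d =>
      ∑ e ∈ Finset.range d, MvPolynomial.C (Sval Fq n e) * monomX Fq s e * lamAux rest e

/-- The `d_1 = d` part of the multiple polylogarithm `λ_A(C)`. -/
def lamHead : CompArray → ℕ → MvPolynomial ℕ (RatFunc Fq)
  | [], d => if d = 0 then 1 else 0
  | (s, n) :: rest, d => MvPolynomial.C (Sval Fq n d) * monomX Fq s d * lamAux Fq rest d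

/-- The multiple polylogarithm
`λ_A(C) = ∑_{d_1 > ⋯ > d_r ≥ 0} S_{d_1}(n_1)⋯S_{d_r}(n_r)·∏_i X_i^{∑_j Σ_j(i) q^{d_j}}`,
a formal power series in the `X_i` over `K∞`, each coefficient a convergent sum in `K∞`. -/
def lam (C : CompArray) : MvPowerSeries ℕ (RatFunc.CompletionAtInfty Fq) :=
  fun m => ∑' d : ℕ, KtoKinf Fq (MvPolynomial.coeff m (lamHead Fq C d))

/-- The multiple polylogarithm `λ_A(C)` as a formal power series over `K` (used when each
coefficient is a finite sum in `K`). -/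
def lamK (C : CompArray) : MvPowerSeries ℕ (RatFunc Fq) :=
  fun m => ∑ᶠ d : ℕ, MvPolynomial.coeff m (lamHead Fq C d)

/-- Auxiliary truncated multiple power sum (untwisted, scalar valued). -/
def SltAuxV : List ℤ → ℕ → RatFunc Fq
  | [], _ => 1
  | n :: rest, d => ∑ e ∈ Finset.range d, Sval Fq n e * SltAuxV rest e

/-- The multiple power sum `S_d(n_1, …, n_r) = ∑_{d = d_1 > ⋯ > d_r ≥ 0} S_{d_1}(n_1)⋯S_{d_r}(n_r)`. -/
def SdV : List ℤ → ℕ → RatFunc Fq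
  | [], d => if d = 0 then 1 else 0
  | n :: rest, d => Sval Fq n d * SltAuxV Fq rest d

/-- Thakur's multiple zeta value `ζ_A(n_1, …, n_r) = ∑_{d ≥ 0} S_d(n_1, …, n_r) ∈ K∞`. -/
def zetaV (ns : List ℤ) : RatFunc.CompletionAtInfty Fq :=
  ∑' d : ℕ, KtoKinf Fq (SdV Fq ns d)

/-- The finite weighted subset (indicator) attached to a finite subset of variable indices. -/
def indic (U : Finset ℕ) : ℕ →₀ ℕ := ∑ i ∈ U, Finsupp.single i 1

/-- `S_d(U; n) = ∑_{a ∈ A⁺, deg a = d} (∏_{i∈U} a(t_i))·a^{−n} ∈ K[t_i : i ∈ U]`. -/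
def SdU (U : Finset ℕ) (n : ℤ) (d : ℕ) : MvPolynomial ℕ (RatFunc Fq) :=
  ∑ c : Fin d → Fq,
    (∏ i ∈ U, atT Fq i (monicPoly Fq d c)) *
      MvPolynomial.C ((AtoK Fq (monicPoly Fq d c)) ^ (-n))

/-! ### Auxiliary development -/


section AuxFrob

lemma aux_addPowCard (m : ℕ) (x y : RatFunc Fq) :
    (x + y) ^ (Fintype.card Fq) ^ m = x ^ (Fintype.card Fq) ^ m + y ^ (Fintype.card Fq) ^ m := by
  have hp : (ringChar Fq).Prime := CharP.char_is_prime Fq (ringChar Fq)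
  haveI : Fact (ringChar Fq).Prime := ⟨hp⟩
  haveI : CharP (RatFunc Fq) (ringChar Fq) :=
    charP_of_injective_algebraMap (algebraMap Fq (RatFunc Fq)).injective (ringChar Fq)
  obtain ⟨n, -, hq⟩ := FiniteField.card Fq (ringChar Fq)
  rw [hq, ← pow_mul, add_pow_char_pow]

/-- The `q^m`-power Frobenius on `K = Fq(θ)` as a ring hom. -/
def frobK (m : ℕ) : RatFunc Fq →+* RatFunc Fq where
  toFun x := x ^ (Fintype.card Fq) ^ m
  map_one' := one_pow _
  map_mul' x y := mul_pow x y _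
  map_zero' := zero_pow (pow_ne_zero m Fintype.card_ne_zero)
  map_add' := aux_addPowCard Fq m

@[simp] lemma frobK_apply (m : ℕ) (x : RatFunc Fq) :
    frobK Fq m x = x ^ (Fintype.card Fq) ^ m := rfl

lemma aux_algebraMap_pow_card (m : ℕ) (c : Fq) :
    (algebraMap Fq (RatFunc Fq) c) ^ (Fintype.card Fq) ^ m = algebraMap Fq (RatFunc Fq) c := by
  rw [← map_pow, FiniteField.pow_card_pow]

lemma aux_addPowCard_one (x y : RatFunc Fq) :
    (x + y) ^ Fintype.card Fq = x ^ Fintype.card Fq + y ^ Fintype.card Fq := by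
  have := aux_addPowCard Fq 1 x y
  simpa using this

lemma aux_algebraMap_pow_card_one (c : Fq) :
    (algebraMap Fq (RatFunc Fq) c) ^ Fintype.card Fq = algebraMap Fq (RatFunc Fq) c := by
  have := aux_algebraMap_pow_card Fq 1 c
  simpa using this

lemma aux_cast_card_K : ((Fintype.card Fq : ℕ) : RatFunc Fq) = 0 := by
  rw [← map_natCast (algebraMap Fq (RatFunc Fq)), FiniteField.cast_card_eq_zero, map_zero]

end AuxFrob

section AuxVan

variable {W : Type} [CommRing W] [Algebra Fq W] {ι : Type}

/-- Multilinear vanishing lemma: a sum over an affine space of dimension `d` of a product of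
fewer than `d⬝(q-1)` linear slots vanishes. -/
lemma aux_van : ∀ (d : ℕ) (s : Finset ι) (L : ι → Polynomial Fq →ₗ[Fq] W)
    (m : Polynomial Fq) (v : Fin d → Polynomial Fq),
    s.card < d * (Fintype.card Fq - 1) →
    ∑ c : Fin d → Fq, ∏ i ∈ s, L i (m + ∑ k, c k • v k) = 0 := by
  intro d
  induction d with
  | zero => intro s L m v hs; exact absurd hs (by simp)
  | succ d ih =>
    intro s L m v hs
    classical
    -- peel off the first coordinate
    rw [← (Fin.consEquiv (fun _ => Fq)).sum_comp, Fintype.sum_prod_type]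
    have hsummand : ∀ (x : Fq) (c' : Fin d → Fq),
        ∏ i ∈ s, L i (m + ∑ k, ((Fin.consEquiv (fun _ => Fq)) (x, c')) k • v k)
          = ∑ t ∈ s.powerset, (algebraMap Fq W x) ^ t.card *
              ((∏ i ∈ t, L i (v 0)) * ∏ i ∈ s \ t, L i (m + ∑ k, c' k • v (Fin.succ k))) := by
      intro x c'
      have hv : ∀ i ∈ s, L i (m + ∑ k, ((Fin.consEquiv (fun _ => Fq)) (x, c')) k • v k)
          = algebraMap Fq W x * L i (v 0) + L i (m + ∑ k, c' k • v (Fin.succ k)) := by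
        intro i _
        have : m + ∑ k, ((Fin.consEquiv (fun _ => Fq)) (x, c')) k • v k
            = x • v 0 + (m + ∑ k, c' k • v (Fin.succ k)) := by
          rw [Fin.sum_univ_succ]
          simp [Fin.consEquiv]
          ring
        rw [this, map_add, map_smul, Algebra.smul_def]
      rw [Finset.prod_congr rfl hv, Finset.prod_add]
      refine Finset.sum_congr rfl fun t ht => ?_
      rw [Finset.prod_mul_distrib, Finset.prod_const, mul_assoc]
    rw [Finset.sum_congr rfl fun x _ => Finset.sum_congr rfl fun c' _ => hsummand x c']
    rw [Finset.sum_congr rfl fun (x : Fq) _ =>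
      Finset.sum_comm (s := (Finset.univ : Finset (Fin d → Fq))) (t := s.powerset), Finset.sum_comm]
    apply Finset.sum_eq_zero
    intro t ht
    rw [← Finset.sum_mul_sum]
    by_cases hcard : t.card < Fintype.card Fq - 1
    · have h1 : ∑ x : Fq, (algebraMap Fq W x) ^ t.card = 0 := by
        simp_rw [← map_pow, ← map_sum]
        rw [FiniteField.sum_pow_lt_card_sub_one Fq t.card hcard, map_zero]
      rw [h1, zero_mul]
    · push_neg at hcard
      have h2 : ∑ c' : Fin d → Fq,
          ((∏ i ∈ t, L i (v 0)) * ∏ i ∈ s \ t, L i (m + ∑ k, c' k • v (Fin.succ k))) = 0 := by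
        rw [← Finset.mul_sum]
        have hb : (s \ t).card < d * (Fintype.card Fq - 1) := by
          have h3 : (s \ t).card = s.card - t.card :=
            Finset.card_sdiff_of_subset (Finset.mem_powerset.mp ht)
          have h4 : (d + 1) * (Fintype.card Fq - 1) = d * (Fintype.card Fq - 1) +
              (Fintype.card Fq - 1) := by ring
          have h6 : t.card ≤ s.card := Finset.card_le_card (Finset.mem_powerset.mp ht)
          rw [h4] at hs
          generalize hD : d * (Fintype.card Fq - 1) = D at hs ⊢
          omega
        rw [ih (s \ t) L m (fun k => v (Fin.succ k)) hb, mul_zero]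
      rw [h2, mul_zero]

end AuxVan

section AuxH

variable {R : Type} [CommRing R]

/-- Complete homogeneous symmetric function of degree `j` in `n` variables. -/
def hc (j : ℕ) {n : ℕ} (x : Fin n → R) : R :=
  ∑ c ∈ Finset.Nat.antidiagonalTuple n j, ∏ i, x i ^ c i

lemma hc_zero {n : ℕ} (x : Fin n → R) : hc 0 x = 1 := by
  rw [hc, Finset.Nat.antidiagonalTuple_zero_right, Finset.sum_singleton]
  simp

lemma hc_one_var (j : ℕ) (x : Fin 1 → R) : hc j x = x 0 ^ j := by
  rw [hc, Finset.Nat.antidiagonalTuple_one, Finset.sum_singleton, Fin.prod_univ_one]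
  simp

lemma hc_split (j : ℕ) {n : ℕ} (i₀ : Fin (n + 1)) (x : Fin (n + 1) → R) :
    hc (j + 1) x = hc (j + 1) (fun k => x (i₀.succAbove k)) + x i₀ * hc j x := by
  classical
  rw [hc, ← Finset.sum_filter_add_sum_filter_not (Finset.Nat.antidiagonalTuple (n+1) (j+1))
    (fun c => c i₀ = 0)]
  congr 1
  · -- part with `c i₀ = 0`
    refine Finset.sum_nbij' (fun c => c ∘ i₀.succAbove) (fun c' => i₀.insertNth 0 c')
      ?_ ?_ ?_ ?_ ?_
    · intro c hc'
      rw [Finset.mem_filter, Finset.Nat.mem_antidiagonalTuple] at hc'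
      rw [Finset.Nat.mem_antidiagonalTuple]
      obtain ⟨h1, h2⟩ := hc'
      rw [Fin.sum_univ_succAbove c i₀, h2, zero_add] at h1
      exact h1
    · intro c' hc'
      rw [Finset.Nat.mem_antidiagonalTuple] at hc'
      rw [Finset.mem_filter, Finset.Nat.mem_antidiagonalTuple]
      constructor
      · rw [Fin.sum_univ_succAbove _ i₀, Fin.insertNth_apply_same]
        simp only [Fin.insertNth_apply_succAbove]
        rw [zero_add]
        exact hc'
      · simp
    · intro c hc'
      rw [Finset.mem_filter] at hc'
      have hzero : c i₀ = 0 := hc'.2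
      conv_rhs => rw [← Fin.insertNth_self_removeNth i₀ c]
      rw [hzero]
      rfl
    · intro c' _
      funext k
      rw [Function.comp_apply, Fin.insertNth_apply_succAbove]
    · intro c hc'
      rw [Finset.mem_filter] at hc'
      rw [Fin.prod_univ_succAbove (fun i => x i ^ c i) i₀, hc'.2, pow_zero, one_mul]
      rfl
  · -- part with `c i₀ ≠ 0`
    rw [hc, Finset.mul_sum]
    refine Finset.sum_nbij' (fun c => Function.update c i₀ (c i₀ - 1))
      (fun c' => Function.update c' i₀ (c' i₀ + 1)) ?_ ?_ ?_ ?_ ?_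
    · intro c hc'
      rw [Finset.mem_filter, Finset.Nat.mem_antidiagonalTuple] at hc'
      rw [Finset.Nat.mem_antidiagonalTuple]
      obtain ⟨h1, h2⟩ := hc'
      rw [Finset.sum_update_of_mem (Finset.mem_univ i₀)]
      rw [← Finset.add_sum_erase Finset.univ c (Finset.mem_univ i₀)] at h1
      have : Finset.univ \ {i₀} = Finset.univ.erase i₀ := by
        rw [Finset.erase_eq]
      rw [this]
      omega
    · intro c' hc'
      rw [Finset.Nat.mem_antidiagonalTuple] at hc'
      rw [Finset.mem_filter, Finset.Nat.mem_antidiagonalTuple]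
      have : Finset.univ \ {i₀} = Finset.univ.erase i₀ := by rw [Finset.erase_eq]
      constructor
      · rw [Finset.sum_update_of_mem (Finset.mem_univ i₀), this]
        rw [← Finset.add_sum_erase Finset.univ c' (Finset.mem_univ i₀)] at hc'
        omega
      · simp [Function.update_self]
    · intro c hc'
      rw [Finset.mem_filter] at hc'
      have h2 := hc'.2
      funext k
      by_cases hk : k = i₀
      · subst hk
        simp only [Function.update_self]
        omega
      · simp [Function.update_of_ne hk]
    · intro c' _
      funext k
      by_cases hk : k = i₀
      · subst hk; simp [Function.update_self]
      · simp [Function.update_of_ne hk]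
    · intro c hc'
      rw [Finset.mem_filter] at hc'
      have h2 := hc'.2
      rw [← Finset.mul_prod_erase Finset.univ (fun i => x i ^ c i) (Finset.mem_univ i₀),
          ← Finset.mul_prod_erase Finset.univ
            (fun i => x i ^ Function.update c i₀ (c i₀ - 1) i) (Finset.mem_univ i₀),
          ← mul_assoc]
      have he : ∏ i ∈ Finset.univ.erase i₀, x i ^ Function.update c i₀ (c i₀ - 1) i
          = ∏ i ∈ Finset.univ.erase i₀, x i ^ c i := by
        refine Finset.prod_congr rfl fun k hk => ?_
        rw [Function.update_of_ne (Finset.ne_of_mem_erase hk)]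
      rw [he]
      congr 1
      rw [Function.update_self, ← pow_succ']
      congr 1
      omega

lemma hc_empty (j : ℕ) (x : Fin 0 → R) : hc (j + 1) x = 0 := by
  rw [hc, Finset.Nat.antidiagonalTuple_zero_succ, Finset.sum_empty]

end AuxH

lemma hc_pow_card {n : ℕ} (j : ℕ) (x : Fin n → RatFunc Fq) :
    (hc j x) ^ Fintype.card Fq = hc j (fun i => x i ^ Fintype.card Fq) := by
  have h := frobK_apply Fq 1 (hc j x)
  rw [pow_one] at h
  rw [← h, hc, map_sum]
  rw [hc]
  refine Finset.sum_congr rfl fun c _ => ?_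
  rw [map_prod]
  refine Finset.prod_congr rfl fun i _ => ?_
  rw [frobK_apply, pow_one, pow_right_comm]

section AuxCarlitz

/-- The product `∏_{x ∈ Fq} (X - C (x·v)) = X^q - C(v^{q-1})·X` in `K[X]`. -/
lemma aux_master (v : RatFunc Fq) :
    ∏ x : Fq, (Polynomial.X - Polynomial.C (algebraMap Fq (RatFunc Fq) x * v))
      = Polynomial.X ^ Fintype.card Fq
        - Polynomial.C (v ^ (Fintype.card Fq - 1)) * Polynomial.X := by
  have hq1 : 1 < Fintype.card Fq := Fintype.one_lt_card
  have base0 : ∏ x : Fq, (Polynomial.X - Polynomial.C x)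
      = Polynomial.X ^ Fintype.card Fq - Polynomial.X := by
    have hm : (Polynomial.X ^ Fintype.card Fq - Polynomial.X : Polynomial Fq).Monic := by
      apply Polynomial.monic_X_pow_sub
      calc (Polynomial.X : Polynomial Fq).degree = 1 := Polynomial.degree_X
      _ < (Fintype.card Fq : WithBot ℕ) := by exact_mod_cast hq1
    have hroots := FiniteField.roots_X_pow_card_sub_X Fq
    have hdeg := FiniteField.X_pow_card_sub_X_natDegree_eq Fq hq1
    have hcard : Multiset.card (Polynomial.X ^ Fintype.card Fq
        - Polynomial.X : Polynomial Fq).roots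
        = (Polynomial.X ^ Fintype.card Fq - Polynomial.X : Polynomial Fq).natDegree := by
      rw [hroots, hdeg]
      simp
    have := Polynomial.prod_multiset_X_sub_C_of_monic_of_roots_card_eq hm hcard
    rw [hroots] at this
    rw [← this, Finset.prod_eq_multiset_prod]
  have baseK : ∏ x : Fq, (Polynomial.X - Polynomial.C (algebraMap Fq (RatFunc Fq) x))
      = Polynomial.X ^ Fintype.card Fq - Polynomial.X := by
    have := congrArg (Polynomial.map (algebraMap Fq (RatFunc Fq))) base0
    rw [Polynomial.map_prod] at this
    simpa [Polynomial.map_sub, Polynomial.map_pow] using this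
  rcases eq_or_ne v 0 with rfl | hv
  · simp only [mul_zero, Polynomial.C_0, sub_zero]
    rw [Finset.prod_const, Finset.card_univ]
    rw [zero_pow (by omega : Fintype.card Fq - 1 ≠ 0), Polynomial.C_0, zero_mul, sub_zero]
  · -- substitute X ↦ C v⁻¹ * X and multiply by C (v ^ q)
    have h1 := congrArg (fun p : Polynomial (RatFunc Fq) =>
      Polynomial.C (v ^ Fintype.card Fq) * p.comp (Polynomial.C v⁻¹ * Polynomial.X)) baseK
    rw [Polynomial.prod_comp] at h1
    have hlhs : Polynomial.C (v ^ Fintype.card Fq) *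
        ∏ x : Fq, ((Polynomial.X - Polynomial.C (algebraMap Fq (RatFunc Fq) x)).comp
          (Polynomial.C v⁻¹ * Polynomial.X))
        = ∏ x : Fq, (Polynomial.X - Polynomial.C (algebraMap Fq (RatFunc Fq) x * v)) := by
      rw [← Finset.card_univ (α := Fq)] 
      rw [show Polynomial.C (v ^ Finset.univ.card (α := Fq))
          = ∏ _x ∈ (Finset.univ : Finset Fq), Polynomial.C v by
        rw [Finset.prod_const, map_pow]]
      rw [← Finset.prod_mul_distrib]
      refine Finset.prod_congr rfl fun x _ => ?_
      rw [Polynomial.sub_comp, Polynomial.X_comp, Polynomial.C_comp]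
      rw [mul_sub, ← mul_assoc, ← Polynomial.C_mul, mul_inv_cancel₀ hv, Polynomial.C_1, one_mul,
        ← Polynomial.C_mul]
      ring_nf
    have hrhs : Polynomial.C (v ^ Fintype.card Fq) *
        ((Polynomial.X ^ Fintype.card Fq - Polynomial.X : Polynomial (RatFunc Fq)).comp
          (Polynomial.C v⁻¹ * Polynomial.X))
        = Polynomial.X ^ Fintype.card Fq
          - Polynomial.C (v ^ (Fintype.card Fq - 1)) * Polynomial.X := by
      rw [Polynomial.sub_comp, Polynomial.pow_comp, Polynomial.X_comp]
      rw [mul_sub, mul_pow, ← mul_assoc, ← Polynomial.C_pow, ← Polynomial.C_mul]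
      rw [← mul_pow, mul_inv_cancel₀ hv, one_pow, Polynomial.C_1, one_mul]
      congr 1
      rw [← mul_assoc, ← Polynomial.C_mul]
      congr 2
      have : v ^ Fintype.card Fq = v ^ (Fintype.card Fq - 1) * v := by
        rw [← pow_succ, Nat.sub_add_cancel (by omega)]
      rw [this, mul_assoc, mul_inv_cancel₀ hv, mul_one]
    rw [hlhs, hrhs] at h1
    exact h1

/-- Value form: `∏_{x∈Fq} (u - x·v) = u^q - v^{q-1}·u`. -/
lemma aux_prodFq (u v : RatFunc Fq) :
    ∏ x : Fq, (u - algebraMap Fq (RatFunc Fq) x * v)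
      = u ^ Fintype.card Fq - v ^ (Fintype.card Fq - 1) * u := by
  have := congrArg (Polynomial.eval u) (aux_master Fq v)
  rw [Polynomial.eval_prod] at this
  simpa using this

/-- Derivative form: `∑_x ∏_{x'≠x} (u - x'·v) = -v^{q-1}`. -/
lemma aux_derivFq (u v : RatFunc Fq) :
    ∑ x : Fq, ∏ x' ∈ Finset.univ.erase x, (u - algebraMap Fq (RatFunc Fq) x' * v)
      = -(v ^ (Fintype.card Fq - 1)) := by
  classical
  have h := congrArg Polynomial.derivative (aux_master Fq v)
  rw [Finset.prod_eq_multiset_prod, Polynomial.derivative_prod] at h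
  have hrhs : Polynomial.derivative (Polynomial.X ^ Fintype.card Fq
      - Polynomial.C (v ^ (Fintype.card Fq - 1)) * Polynomial.X : Polynomial (RatFunc Fq))
      = - Polynomial.C (v ^ (Fintype.card Fq - 1)) := by
    rw [Polynomial.derivative_sub, Polynomial.derivative_X_pow, Polynomial.derivative_C_mul,
      Polynomial.derivative_X, mul_one]
    rw [show ((Fintype.card Fq : ℕ) : RatFunc Fq) = 0 from aux_cast_card_K Fq]
    simp
  rw [hrhs] at h
  have hlhs : (Multiset.map (fun x => (Multiset.map
        (fun x' => Polynomial.X - Polynomial.C (algebraMap Fq (RatFunc Fq) x' * v))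
        ((Finset.univ.val).erase x)).prod *
        Polynomial.derivative (Polynomial.X - Polynomial.C (algebraMap Fq (RatFunc Fq) x * v)))
      (Finset.univ.val : Multiset Fq)).sum
      = ∑ x : Fq, ∏ x' ∈ Finset.univ.erase x,
          (Polynomial.X - Polynomial.C (algebraMap Fq (RatFunc Fq) x' * v)) := by
    rw [Finset.sum]
    congr 1
    refine Multiset.map_congr rfl fun x _ => ?_
    rw [Polynomial.derivative_X_sub_C, mul_one, Finset.prod, Finset.erase_val]
  rw [hlhs] at h
  have := congrArg (Polynomial.eval u) h
  rw [Polynomial.eval_finset_sum] at this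
  simp only [Polynomial.eval_prod, Polynomial.eval_sub, Polynomial.eval_X, Polynomial.eval_C,
    Polynomial.eval_neg] at this
  exact this

/-- `∑_{x∈Fq} (u - x·v)⁻¹ = -v^{q-1}/(u^q - v^{q-1}u)` when no factor vanishes. -/
lemma aux_sum_inv (u v : RatFunc Fq) (h : ∀ x : Fq, u - algebraMap Fq (RatFunc Fq) x * v ≠ 0) :
    ∑ x : Fq, (u - algebraMap Fq (RatFunc Fq) x * v)⁻¹
      = -(v ^ (Fintype.card Fq - 1)) / (u ^ Fintype.card Fq - v ^ (Fintype.card Fq - 1) * u) := by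
  classical
  have hD : ∏ x : Fq, (u - algebraMap Fq (RatFunc Fq) x * v) ≠ 0 :=
    Finset.prod_ne_zero_iff.mpr fun x _ => h x
  have step : ∀ x : Fq, (u - algebraMap Fq (RatFunc Fq) x * v)⁻¹
      = (∏ x' ∈ Finset.univ.erase x, (u - algebraMap Fq (RatFunc Fq) x' * v)) /
        (∏ x' : Fq, (u - algebraMap Fq (RatFunc Fq) x' * v)) := by
    intro x
    rw [← Finset.mul_prod_erase Finset.univ _ (Finset.mem_univ x)]
    rw [eq_div_iff (mul_ne_zero (h x)
      (Finset.prod_ne_zero_iff.mpr fun y _ => h y))]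
    rw [← mul_assoc, inv_mul_cancel₀ (h x), one_mul]
  rw [Finset.sum_congr rfl fun x _ => step x, ← Finset.sum_div, aux_derivFq, aux_prodFq]

/-! #### The additive polynomial `ε_d` and Carlitz's identity -/

/-- `β_d(c) = ∑ c_i θ^i`. -/
def betaK (d : ℕ) (c : Fin d → Fq) : RatFunc Fq :=
  ∑ i : Fin d, algebraMap Fq (RatFunc Fq) (c i) * RatFunc.X ^ (i : ℕ)

/-- `ε_d(y) = ∏_{deg b < d} (y - b)`. -/
def epsK (d : ℕ) (y : RatFunc Fq) : RatFunc Fq :=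
  ∏ c : Fin d → Fq, (y - betaK Fq d c)

/-- The derivative constants of `ε_d`. -/
def LcK : ℕ → RatFunc Fq
  | 0 => 1
  | d + 1 => -(epsK Fq d (RatFunc.X ^ d)) ^ (Fintype.card Fq - 1) * LcK d

/-- `D_d = (θ^{q^d}-θ^{q^{d-1}})⋯` type product (value of `ε_d(θ^d)`). -/
def QdK : ℕ → RatFunc Fq
  | 0 => 1
  | d + 1 => (RatFunc.X ^ (Fintype.card Fq) ^ (d + 1) - RatFunc.X) * (QdK d) ^ Fintype.card Fq

lemma epsK_zero (y : RatFunc Fq) : epsK Fq 0 y = y := by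
  rw [epsK, Fintype.prod_unique]
  simp [betaK]

lemma betaK_insertNth (d : ℕ) (x : Fq) (c' : Fin d → Fq) :
    betaK Fq (d + 1) ((Fin.last d).insertNth x c')
      = betaK Fq d c' + algebraMap Fq (RatFunc Fq) x * RatFunc.X ^ d := by
  rw [betaK, Fin.sum_univ_succAbove _ (Fin.last d), Fin.insertNth_apply_same]
  simp only [Fin.insertNth_apply_succAbove]
  simp only [Fin.succAbove_last, Fin.val_last, Fin.coe_castSucc]
  rw [add_comm, betaK]

lemma epsK_succ (d : ℕ) (y : RatFunc Fq) :
    epsK Fq (d + 1) y = ∏ x : Fq, epsK Fq d (y - algebraMap Fq (RatFunc Fq) x * RatFunc.X ^ d) := by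
  classical
  rw [epsK, ← (Fin.insertNthEquiv (fun _ => Fq) (Fin.last d)).prod_comp,
    Fintype.prod_prod_type]
  refine Finset.prod_congr rfl fun x _ => ?_
  rw [epsK]
  refine Finset.prod_congr rfl fun c' _ => ?_
  have : (Fin.insertNthEquiv (fun _ => Fq) (Fin.last d)) (x, c')
      = (Fin.last d).insertNth x c' := rfl
  rw [this, betaK_insertNth]
  ring

lemma epsK_add_smul (d : ℕ) :
    (∀ y z : RatFunc Fq, epsK Fq d (y + z) = epsK Fq d y + epsK Fq d z) ∧
    (∀ (x : Fq) (y : RatFunc Fq),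
      epsK Fq d (algebraMap Fq (RatFunc Fq) x * y) = algebraMap Fq (RatFunc Fq) x * epsK Fq d y) := by
  induction d with
  | zero => constructor <;> intros <;> simp [epsK_zero]
  | succ d ih =>
    obtain ⟨iha, ihs⟩ := ih
    have ihsub : ∀ y z : RatFunc Fq, epsK Fq d (y - z) = epsK Fq d y - epsK Fq d z := by
      intro y z
      have := iha (y - z) z
      rw [sub_add_cancel] at this
      linear_combination -this
    have hform : ∀ w : RatFunc Fq, epsK Fq (d + 1) w
        = (epsK Fq d w) ^ Fintype.card Fq
          - (epsK Fq d (RatFunc.X ^ d)) ^ (Fintype.card Fq - 1) * epsK Fq d w := by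
      intro w
      rw [epsK_succ]
      have hcongr : ∏ x : Fq, epsK Fq d (w - algebraMap Fq (RatFunc Fq) x * RatFunc.X ^ d)
          = ∏ x : Fq, (epsK Fq d w - algebraMap Fq (RatFunc Fq) x * epsK Fq d (RatFunc.X ^ d)) :=
        Finset.prod_congr rfl fun x _ => by rw [ihsub, ihs]
      rw [hcongr]
      exact aux_prodFq Fq _ _
    constructor
    · intro y z
      rw [hform, hform, hform, iha, aux_addPowCard_one Fq]
      ring
    · intro x y
      rw [hform, hform, ihs, mul_pow, aux_algebraMap_pow_card_one Fq]
      ring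

lemma epsK_formula (d : ℕ) (w : RatFunc Fq) :
    epsK Fq (d + 1) w = (epsK Fq d w) ^ Fintype.card Fq
      - (epsK Fq d (RatFunc.X ^ d)) ^ (Fintype.card Fq - 1) * epsK Fq d w := by
  obtain ⟨iha, ihs⟩ := epsK_add_smul Fq d
  have ihsub : ∀ y z : RatFunc Fq, epsK Fq d (y - z) = epsK Fq d y - epsK Fq d z := by
    intro y z
    have := iha (y - z) z
    rw [sub_add_cancel] at this
    linear_combination -this
  rw [epsK_succ]
  have hcongr : ∏ x : Fq, epsK Fq d (w - algebraMap Fq (RatFunc Fq) x * RatFunc.X ^ d)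
      = ∏ x : Fq, (epsK Fq d w - algebraMap Fq (RatFunc Fq) x * epsK Fq d (RatFunc.X ^ d)) :=
    Finset.prod_congr rfl fun x _ => by rw [ihsub, ihs]
  rw [hcongr]
  exact aux_prodFq Fq _ _

lemma epsK_theta_pow : ∀ d j : ℕ, epsK Fq d (RatFunc.X ^ (d + j))
    = hc j (fun k : Fin (d + 1) => (RatFunc.X : RatFunc Fq) ^ (Fintype.card Fq) ^ (k : ℕ))
      * QdK Fq d := by
  intro d
  induction d with
  | zero =>
    intro j
    rw [epsK_zero, hc_one_var, QdK, mul_one]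
    norm_num
  | succ d ih =>
    intro j
    have hq1 : 1 ≤ Fintype.card Fq := Fintype.card_pos
    set xs : Fin (d + 2) → RatFunc Fq :=
      fun k => (RatFunc.X : RatFunc Fq) ^ (Fintype.card Fq) ^ (k : ℕ) with hxs
    have hxcast : (fun k : Fin (d + 1) => xs (Fin.castSucc k))
        = fun k : Fin (d + 1) => (RatFunc.X : RatFunc Fq) ^ (Fintype.card Fq) ^ (k : ℕ) := by
      funext k; simp [hxs]
    have hxsucc : (fun k : Fin (d + 1) => xs (Fin.succ k))
        = fun k : Fin (d + 1) =>
            ((RatFunc.X : RatFunc Fq) ^ (Fintype.card Fq) ^ (k : ℕ)) ^ Fintype.card Fq := by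
      funext k
      simp only [hxs, Fin.val_succ, ← pow_mul, pow_succ]
    have key : epsK Fq (d + 1) (RatFunc.X ^ (d + 1 + j))
        = (epsK Fq d (RatFunc.X ^ (d + (j + 1)))) ^ Fintype.card Fq
          - (epsK Fq d (RatFunc.X ^ d)) ^ (Fintype.card Fq - 1)
            * epsK Fq d (RatFunc.X ^ (d + (j + 1))) := by
      rw [show d + 1 + j = d + (j + 1) by omega]
      exact epsK_formula Fq d _
    have hd0 : epsK Fq d (RatFunc.X ^ d) = QdK Fq d := by
      have := ih 0
      rw [add_zero, hc_zero, one_mul] at this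
      exact this
    rw [key, ih (j + 1), hd0]
    set h' : RatFunc Fq := hc (j + 1)
      (fun k : Fin (d + 1) => (RatFunc.X : RatFunc Fq) ^ (Fintype.card Fq) ^ (k : ℕ)) with hh'
    set Q : RatFunc Fq := QdK Fq d with hQ
    have hQs : Q ^ (Fintype.card Fq - 1) * Q = Q ^ Fintype.card Fq := by
      rw [← pow_succ, Nat.sub_add_cancel hq1]
    have e1 : (h' * Q) ^ Fintype.card Fq
        - Q ^ (Fintype.card Fq - 1) * (h' * Q)
        = (h' ^ Fintype.card Fq - h') * Q ^ Fintype.card Fq := by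
      rw [mul_pow, ← hQs]
      ring
    rw [e1]
    -- now rewrite h'^q - h' via the two split lemmas
    have hfr : h' ^ Fintype.card Fq = hc (j + 1) (fun k : Fin (d + 1) => xs (Fin.succ k)) := by
      rw [hh', hc_pow_card, hxsucc]
    have hsucc0 : hc (j + 1) (fun k : Fin (d + 1) => xs ((0 : Fin (d + 2)).succAbove k))
        = hc (j + 1) (fun k : Fin (d + 1) => xs (Fin.succ k)) := by
      congr 1
    have hsucclast : hc (j + 1) (fun k : Fin (d + 1) => xs ((Fin.last (d + 1)).succAbove k))
        = h' := by
      rw [hh', ← hxcast]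
      congr 1
      funext k
      rw [Fin.succAbove_last]
    have split0 := hc_split (j := j) (i₀ := (0 : Fin (d + 2))) xs
    have splitlast := hc_split (j := j) (i₀ := Fin.last (d + 1)) xs
    rw [hsucc0] at split0
    rw [hsucclast] at splitlast
    have e2 : h' ^ Fintype.card Fq - h' = (xs (Fin.last (d + 1)) - xs 0) * hc j xs := by
      rw [hfr]
      have : hc (j + 1) (fun k : Fin (d + 1) => xs (Fin.succ k))
          = hc (j + 1) xs - xs 0 * hc j xs := by rw [split0]; ring
      rw [this]
      have : h' = hc (j + 1) xs - xs (Fin.last (d + 1)) * hc j xs := by rw [splitlast]; ring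
      rw [this]
      ring
    rw [e2]
    have hlast : xs (Fin.last (d + 1)) = (RatFunc.X : RatFunc Fq) ^ (Fintype.card Fq) ^ (d + 1) := by
      simp [hxs]
    have h0 : xs 0 = (RatFunc.X : RatFunc Fq) := by simp [hxs]
    rw [hlast, h0]
    rw [show QdK Fq (d + 1) = (RatFunc.X ^ (Fintype.card Fq) ^ (d + 1) - RatFunc.X)
      * (QdK Fq d) ^ Fintype.card Fq from rfl]
    rw [hQ]
    ring

lemma epsK_theta_self (d : ℕ) : epsK Fq d (RatFunc.X ^ d) = QdK Fq d := by
  have := epsK_theta_pow Fq d 0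
  rw [add_zero, hc_zero, one_mul] at this
  exact this

lemma theta_pow_injective : Function.Injective
    (fun n : ℕ => (RatFunc.X : RatFunc Fq) ^ n) := by
  intro n m h
  dsimp only at h
  have hX : (RatFunc.X : RatFunc Fq) = algebraMap (Polynomial Fq) (RatFunc Fq) Polynomial.X :=
    (RatFunc.algebraMap_X (K := Fq)).symm
  rw [hX, ← map_pow, ← map_pow] at h
  have := RatFunc.algebraMap_injective Fq h  -- check name/args
  have := congrArg Polynomial.natDegree this
  simpa [Polynomial.natDegree_X_pow] using this

lemma QdK_ne_zero (d : ℕ) : QdK Fq d ≠ 0 := by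
  induction d with
  | zero => exact one_ne_zero
  | succ d ih =>
    have h1 : (RatFunc.X : RatFunc Fq) ^ (Fintype.card Fq) ^ (d + 1) - RatFunc.X ≠ 0 := by
      rw [sub_ne_zero]
      intro h
      have := theta_pow_injective Fq (a₁ := (Fintype.card Fq) ^ (d + 1)) (a₂ := 1) (by
        simpa using h)
      have hq1 : 1 < Fintype.card Fq := Fintype.one_lt_card
      have : (Fintype.card Fq) ^ (d + 1) = 1 := this
      have h2 : 1 < (Fintype.card Fq) ^ (d + 1) := Nat.one_lt_pow (by omega) hq1
      omega
    exact mul_ne_zero h1 (pow_ne_zero _ ih)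

lemma LcK_ne_zero (d : ℕ) : LcK Fq d ≠ 0 := by
  induction d with
  | zero => exact one_ne_zero
  | succ d ih =>
    rw [LcK]
    refine mul_ne_zero (neg_ne_zero.mpr (pow_ne_zero _ ?_)) ih
    rw [epsK_theta_self]
    exact QdK_ne_zero Fq d

lemma lel_ne_zero (d : ℕ) : lel Fq d ≠ 0 := by
  rw [lel]
  refine Finset.prod_ne_zero_iff.mpr fun k _ => ?_
  rw [sub_ne_zero]
  intro h
  have := theta_pow_injective Fq (a₁ := 1) (a₂ := (Fintype.card Fq) ^ (k + 1)) (by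
    simpa using h)
  have hq1 : 1 < Fintype.card Fq := Fintype.one_lt_card
  have h2 : 1 < (Fintype.card Fq) ^ (k + 1) := Nat.one_lt_pow (by omega) hq1
  omega

lemma lel_mul_LcK (d : ℕ) : lel Fq d * LcK Fq d = QdK Fq d := by
  induction d with
  | zero => simp [lel, LcK, QdK]
  | succ d ih =>
    have hq1 : 1 ≤ Fintype.card Fq := Fintype.card_pos
    rw [lel, Finset.prod_range_succ, ← lel, LcK, epsK_theta_self]
    have : lel Fq d * (RatFunc.X - RatFunc.X ^ (Fintype.card Fq) ^ (d + 1))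
        * (-(QdK Fq d) ^ (Fintype.card Fq - 1) * LcK Fq d)
        = (RatFunc.X ^ (Fintype.card Fq) ^ (d + 1) - RatFunc.X)
          * ((QdK Fq d) ^ (Fintype.card Fq - 1) * (lel Fq d * LcK Fq d)) := by ring
    rw [this, ih]
    rw [show QdK Fq (d + 1) = (RatFunc.X ^ (Fintype.card Fq) ^ (d + 1) - RatFunc.X)
      * (QdK Fq d) ^ Fintype.card Fq from rfl]
    congr 1
    rw [← pow_succ, Nat.sub_add_cancel hq1]

lemma epsK_sum_inv : ∀ (d : ℕ) (y : RatFunc Fq), epsK Fq d y ≠ 0 →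
    ∑ c : Fin d → Fq, (y - betaK Fq d c)⁻¹ = LcK Fq d / epsK Fq d y := by
  intro d
  induction d with
  | zero =>
    intro y hy
    rw [Fintype.sum_unique]
    rw [epsK_zero] at hy ⊢
    simp [betaK, LcK, one_div]
  | succ d ih =>
    intro y hy
    obtain ⟨iha, ihs⟩ := epsK_add_smul Fq d
    have ihsub : ∀ y z : RatFunc Fq, epsK Fq d (y - z) = epsK Fq d y - epsK Fq d z := by
      intro y z
      have := iha (y - z) z
      rw [sub_add_cancel] at this
      linear_combination -this
    have hx : ∀ x : Fq, epsK Fq d (y - algebraMap Fq (RatFunc Fq) x * RatFunc.X ^ d) ≠ 0 := by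
      rw [epsK_succ] at hy
      exact fun x => Finset.prod_ne_zero_iff.mp hy x (Finset.mem_univ x)
    -- reindex the sum
    have hsum : ∑ c : Fin (d + 1) → Fq, (y - betaK Fq (d + 1) c)⁻¹
        = ∑ x : Fq, ∑ c' : Fin d → Fq,
            ((y - algebraMap Fq (RatFunc Fq) x * RatFunc.X ^ d) - betaK Fq d c')⁻¹ := by
      rw [← (Fin.insertNthEquiv (fun _ => Fq) (Fin.last d)).sum_comp,
        Fintype.sum_prod_type]
      refine Finset.sum_congr rfl fun x _ => Finset.sum_congr rfl fun c' _ => ?_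
      have : (Fin.insertNthEquiv (fun _ => Fq) (Fin.last d)) (x, c')
          = (Fin.last d).insertNth x c' := rfl
      rw [this, betaK_insertNth]
      ring_nf
    rw [hsum]
    have hIH : ∀ x : Fq, ∑ c' : Fin d → Fq,
        ((y - algebraMap Fq (RatFunc Fq) x * RatFunc.X ^ d) - betaK Fq d c')⁻¹
        = LcK Fq d / (epsK Fq d y - algebraMap Fq (RatFunc Fq) x * epsK Fq d (RatFunc.X ^ d)) := by
      intro x
      rw [ih _ (hx x)]
      congr 1
      rw [ihsub, ihs]
    rw [Finset.sum_congr rfl fun x _ => hIH x]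
    have hne : ∀ x : Fq,
        epsK Fq d y - algebraMap Fq (RatFunc Fq) x * epsK Fq d (RatFunc.X ^ d) ≠ 0 := by
      intro x
      rw [← ihs, ← ihsub]
      exact hx x
    have : ∑ x : Fq, LcK Fq d /
        (epsK Fq d y - algebraMap Fq (RatFunc Fq) x * epsK Fq d (RatFunc.X ^ d))
        = LcK Fq d * ∑ x : Fq,
          (epsK Fq d y - algebraMap Fq (RatFunc Fq) x * epsK Fq d (RatFunc.X ^ d))⁻¹ := by
      rw [Finset.mul_sum]
      exact Finset.sum_congr rfl fun x _ => div_eq_mul_inv _ _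
    rw [this, aux_sum_inv Fq _ _ hne]
    rw [epsK_formula Fq d y]
    rw [LcK]
    field_simp

lemma AtoK_monicPoly (d : ℕ) (c : Fin d → Fq) :
    AtoK Fq (monicPoly Fq d c) = RatFunc.X ^ d + betaK Fq d c := by
  rw [monicPoly, AtoK, map_add, map_pow, RatFunc.algebraMap_X, map_sum]
  congr 1
  rw [betaK]
  refine Finset.sum_congr rfl fun i _ => ?_
  rw [map_mul, map_pow, RatFunc.algebraMap_X]
  congr 1

lemma AtoK_monicPoly_ne_zero (d : ℕ) (c : Fin d → Fq) : AtoK Fq (monicPoly Fq d c) ≠ 0 := by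
  have hmp : monicPoly Fq d c ≠ 0 := by
    intro h
    have := congrArg (Polynomial.coeff · d) h
    simp only [monicPoly] at this
    rw [Polynomial.coeff_add, Polynomial.coeff_X_pow] at this
    simp only [if_pos rfl, Polynomial.coeff_zero] at this
    rw [Polynomial.finset_sum_coeff] at this
    have hz : ∀ i : Fin d, (Polynomial.C (c i) * Polynomial.X ^ (i : ℕ)).coeff d = 0 := by
      intro i
      rw [Polynomial.coeff_C_mul, Polynomial.coeff_X_pow, if_neg (by omega), mul_zero]
    rw [Finset.sum_congr rfl fun i _ => hz i, Finset.sum_const_zero] at this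
    simp at this
  intro h
  have h' : algebraMap (Polynomial Fq) (RatFunc Fq) (monicPoly Fq d c)
      = algebraMap (Polynomial Fq) (RatFunc Fq) 0 := by
    rw [map_zero]; exact h
  exact hmp (RatFunc.algebraMap_injective Fq h')

/-- **Carlitz's identity** `∑_{a ∈ A⁺, deg a = d} 1/a = 1/l_d`. -/
lemma aux_carlitz (d : ℕ) :
    ∑ c : Fin d → Fq, (AtoK Fq (monicPoly Fq d c))⁻¹ = (lel Fq d)⁻¹ := by
  have h1 : ∑ c : Fin d → Fq, (AtoK Fq (monicPoly Fq d c))⁻¹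
      = ∑ c : Fin d → Fq, (RatFunc.X ^ d - betaK Fq d c)⁻¹ := by
    refine Fintype.sum_equiv (Equiv.neg (Fin d → Fq)) _ _ fun c => ?_
    rw [AtoK_monicPoly]
    congr 1
    have hbn : betaK Fq d (-c) = -betaK Fq d c := by
      rw [betaK, betaK, ← Finset.sum_neg_distrib]
      refine Finset.sum_congr rfl fun i _ => ?_
      rw [Pi.neg_apply, map_neg, neg_mul]
    rw [show (Equiv.neg (Fin d → Fq)) c = -c from rfl, hbn]
    ring
  rw [h1, epsK_sum_inv Fq d _ (by rw [epsK_theta_self]; exact QdK_ne_zero Fq d)]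
  rw [epsK_theta_self, ← lel_mul_LcK]
  have hl := lel_ne_zero Fq d
  have hL := LcK_ne_zero Fq d
  field_simp

end AuxCarlitz

section AuxMain

/-- Frobenius as an `Fq`-algebra homomorphism of `K`. -/
def frobKa (m : ℕ) : RatFunc Fq →ₐ[Fq] RatFunc Fq :=
  { frobK Fq m with commutes' := fun c => aux_algebraMap_pow_card Fq m c }

lemma aux_eval_pow (j : ℕ) (a : Polynomial Fq) :
    Polynomial.aeval ((RatFunc.X : RatFunc Fq) ^ (Fintype.card Fq) ^ j) a
      = (AtoK Fq a) ^ (Fintype.card Fq) ^ j := by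
  have h : (Polynomial.aeval ((RatFunc.X : RatFunc Fq) ^ (Fintype.card Fq) ^ j) :
        Polynomial Fq →ₐ[Fq] RatFunc Fq)
      = (frobKa Fq j).comp (IsScalarTower.toAlgHom Fq (Polynomial Fq) (RatFunc Fq)) := by
    apply Polynomial.algHom_ext
    rw [Polynomial.aeval_X, AlgHom.comp_apply]
    show _ = frobK Fq j (algebraMap (Polynomial Fq) (RatFunc Fq) Polynomial.X)
    rw [RatFunc.algebraMap_X, frobK_apply]
  have := congrArg (fun φ : Polynomial Fq →ₐ[Fq] RatFunc Fq => φ a) h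
  rw [this]
  rfl

lemma aux_eval_map (j : ℕ) (a : Polynomial Fq) :
    Polynomial.eval
        ((MvPolynomial.C (RatFunc.X ^ (Fintype.card Fq) ^ j)) : MvPolynomial ℕ (RatFunc Fq))
        (a.map (algebraMap Fq (MvPolynomial ℕ (RatFunc Fq))))
      = MvPolynomial.C ((AtoK Fq a) ^ (Fintype.card Fq) ^ j) := by
  rw [Polynomial.eval_map]
  have h1 : (algebraMap Fq (MvPolynomial ℕ (RatFunc Fq)))
      = (MvPolynomial.C : RatFunc Fq →+* MvPolynomial ℕ (RatFunc Fq)).comp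
          (algebraMap Fq (RatFunc Fq)) := by
    rw [IsScalarTower.algebraMap_eq Fq (RatFunc Fq) (MvPolynomial ℕ (RatFunc Fq)),
      MvPolynomial.algebraMap_eq]
  rw [h1, ← Polynomial.hom_eval₂]
  congr 1
  rw [← Polynomial.aeval_def]
  exact aux_eval_pow Fq j a

lemma aux_eval_map_X (i₀ : ℕ) (a : Polynomial Fq) :
    Polynomial.eval (MvPolynomial.X i₀ : MvPolynomial ℕ (RatFunc Fq))
        (a.map (algebraMap Fq (MvPolynomial ℕ (RatFunc Fq))))
      = atT Fq i₀ a := by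
  rw [Polynomial.eval_map, atT, Polynomial.aeval_def]

lemma monicPoly_lower_coeff (d : ℕ) (c : Fin d → Fq) {m : ℕ} (h : d ≤ m) :
    (∑ i : Fin d, Polynomial.C (c i) * Polynomial.X ^ (i : ℕ)).coeff m = 0 := by
  rw [Polynomial.finset_sum_coeff]
  refine Finset.sum_eq_zero fun i _ => ?_
  rw [Polynomial.coeff_C_mul, Polynomial.coeff_X_pow, if_neg (by omega), mul_zero]

lemma monicPoly_coeff (d : ℕ) (c : Fin d → Fq) {m : ℕ} (h : d ≤ m) :
    (monicPoly Fq d c).coeff m = if m = d then 1 else 0 := by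
  rw [monicPoly, Polynomial.coeff_add, Polynomial.coeff_X_pow,
    monicPoly_lower_coeff Fq d c h, add_zero]

lemma monicPoly_affine (d : ℕ) (c : Fin d → Fq) :
    monicPoly Fq d c = Polynomial.X ^ d + ∑ k : Fin d, c k • Polynomial.X ^ (k : ℕ) := by
  rw [monicPoly]
  congr 1
  refine Finset.sum_congr rfl fun k _ => ?_
  rw [Polynomial.smul_eq_C_mul]

lemma aux_geom_sum (j : ℕ) :
    ∑ m ∈ Finset.range j, (Fintype.card Fq) ^ m * (Fintype.card Fq - 1)
      = (Fintype.card Fq) ^ j - 1 := by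
  have hq : 1 < Fintype.card Fq := Fintype.one_lt_card
  induction j with
  | zero => simp
  | succ j ih =>
    rw [Finset.sum_range_succ, ih, pow_succ]
    have h1 : 1 ≤ (Fintype.card Fq) ^ j := Nat.one_le_pow _ _ (by omega)
    generalize hA : (Fintype.card Fq) ^ j = A at h1 ⊢
    obtain ⟨q', hq'⟩ : ∃ q', Fintype.card Fq = q' + 1 := ⟨Fintype.card Fq - 1, by omega⟩
    rw [hq']
    simp only [Nat.add_sub_cancel, Nat.mul_succ]
    omega

/-- Application of the vanishing lemma to the sums appearing as values of `F` at `θ^{q^j}`. -/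
lemma aux_vanishing (d j : ℕ) (hj : j < d) (U' : Finset ℕ)
    (hU' : U'.card < Fintype.card Fq - 1) :
    ∑ c : Fin d → Fq, (∏ i ∈ U', atT Fq i (monicPoly Fq d c)) *
      MvPolynomial.C ((AtoK Fq (monicPoly Fq d c)) ^ ((Fintype.card Fq) ^ j - 1)) = 0 := by
  classical
  have hq : 1 < Fintype.card Fq := Fintype.one_lt_card
  -- linear slot maps
  set R := MvPolynomial ℕ (RatFunc Fq)
  let LT : ℕ → Polynomial Fq →ₗ[Fq] R := fun i =>
    (Polynomial.aeval (MvPolynomial.X i : R) : Polynomial Fq →ₐ[Fq] R).toLinearMap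
  let LF : ℕ → Polynomial Fq →ₗ[Fq] R := fun m =>
    { toFun := fun a => MvPolynomial.C ((AtoK Fq a) ^ (Fintype.card Fq) ^ m)
      map_add' := by
        intro a b
        rw [map_add, aux_addPowCard, map_add]
      map_smul' := by
        intro x a
        have h1 : AtoK Fq (x • a) = algebraMap Fq (RatFunc Fq) x * AtoK Fq a := by
          rw [Algebra.smul_def, map_mul]
          congr 1
        rw [h1, mul_pow, aux_algebraMap_pow_card, map_mul, RingHom.id_apply,
          Algebra.smul_def, IsScalarTower.algebraMap_apply Fq (RatFunc Fq) R,
          MvPolynomial.algebraMap_eq] }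
  set s : Finset ((ℕ × ℕ) ⊕ ℕ) :=
    ((Finset.range j) ×ˢ (Finset.range (Fintype.card Fq - 1))).disjSum U' with hs
  have hcard : s.card < d * (Fintype.card Fq - 1) := by
    rw [hs, Finset.card_disjSum, Finset.card_product, Finset.card_range, Finset.card_range]
    have h1 : (j + 1) * (Fintype.card Fq - 1) ≤ d * (Fintype.card Fq - 1) :=
      Nat.mul_le_mul_right _ (by omega)
    have h2 : (j + 1) * (Fintype.card Fq - 1)
        = j * (Fintype.card Fq - 1) + (Fintype.card Fq - 1) := by ring
    omega
  have hvan := aux_van Fq d s (Sum.elim (fun p => LF p.1) (fun i => LT i))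
    (Polynomial.X ^ d) (fun k => Polynomial.X ^ (k : ℕ)) hcard
  rw [← hvan]
  refine Finset.sum_congr rfl fun c _ => ?_
  rw [← monicPoly_affine Fq d c]
  rw [Finset.prod_disjSum]
  rw [mul_comm]
  congr 1
  · -- Frobenius part
    rw [Finset.prod_product]
    have h1 : ∀ m ∈ Finset.range j, (∏ _k ∈ Finset.range (Fintype.card Fq - 1),
        (Sum.elim (fun p : ℕ × ℕ => LF p.1) (fun i => LT i) (Sum.inl (m, _k)))
          (monicPoly Fq d c))
        = MvPolynomial.C ((AtoK Fq (monicPoly Fq d c))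
            ^ ((Fintype.card Fq) ^ m * (Fintype.card Fq - 1))) := by
      intro m _
      have h2 : ∀ _k ∈ Finset.range (Fintype.card Fq - 1),
          (Sum.elim (fun p : ℕ × ℕ => LF p.1) (fun i => LT i) (Sum.inl (m, _k)))
            (monicPoly Fq d c)
          = MvPolynomial.C ((AtoK Fq (monicPoly Fq d c)) ^ (Fintype.card Fq) ^ m) :=
        fun _ _ => rfl
      rw [Finset.prod_congr rfl h2, Finset.prod_const, Finset.card_range, ← map_pow, ← pow_mul]
    rw [Finset.prod_congr rfl h1, ← map_prod, Finset.prod_pow_eq_pow_sum, aux_geom_sum]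


lemma aux_poly_zero {S : Type} [CommRing S] [IsDomain S] (p : Polynomial S) (d : ℕ)
    (hdeg : p.degree < (d : ℕ)) (r : Fin d → S) (hinj : Function.Injective r)
    (hr : ∀ k, p.eval (r k) = 0) : p = 0 := by
  by_cases hp : p = 0
  · exact hp
  · refine Polynomial.eq_zero_of_natDegree_lt_card_of_eval_eq_zero p hinj hr ?_
    rw [Fintype.card_fin]
    exact (Polynomial.natDegree_lt_iff_degree_lt hp).mpr hdeg

end AuxMain



/-- **Simple twisted power sums.**  Let `U` be a finite subset of the variable indices with
`|U| < q`.  Then for every `d ≥ 0`,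
`∑_{a ∈ A⁺, deg a = d} (∏_{i∈U} a(t_i))/a = (∏_{i∈U} b_d(t_i))/l_d` in `K[t_i : i ∈ U]`. -/
theorem simple_twisted_power_sum_formula
    (Fq : Type) [Field Fq] [Fintype Fq]
    (U : Finset ℕ) (hU : U.card < Fintype.card Fq) (d : ℕ) :
    SdU Fq U 1 d = (∏ i ∈ U, bMv Fq d i) * MvPolynomial.C (lel Fq d)⁻¹ := by
  classical
  revert hU
  induction U using Finset.induction_on with
  | empty =>
    intro _
    rw [SdU, Finset.prod_empty, one_mul]
    have hterm : ∀ c : Fin d → Fq,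
        (∏ i ∈ (∅ : Finset ℕ), atT Fq i (monicPoly Fq d c)) *
          MvPolynomial.C ((AtoK Fq (monicPoly Fq d c)) ^ (-(1 : ℤ)))
        = MvPolynomial.C ((AtoK Fq (monicPoly Fq d c))⁻¹) := by
      intro c
      rw [Finset.prod_empty, one_mul, zpow_neg, zpow_one]
    rw [Finset.sum_congr rfl fun c _ => hterm c, ← map_sum, aux_carlitz]
  | @insert i₀ U' hni ih =>
    intro hU
    have hq : 1 < Fintype.card Fq := Fintype.one_lt_card
    have hcardins : (insert i₀ U').card = U'.card + 1 := Finset.card_insert_of_notMem hni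
    have hU'q : U'.card < Fintype.card Fq := by omega
    have hU'q1 : U'.card < Fintype.card Fq - 1 := by omega
    have ihU := ih hU'q
    set R := MvPolynomial ℕ (RatFunc Fq) with hR
    set u : R := (∏ i ∈ U', bMv Fq d i) * MvPolynomial.C (lel Fq d)⁻¹ with hu
    set F : Polynomial R := ∑ c : Fin d → Fq,
      Polynomial.C ((∏ i ∈ U', atT Fq i (monicPoly Fq d c)) *
        MvPolynomial.C ((AtoK Fq (monicPoly Fq d c))⁻¹)) *
        (monicPoly Fq d c).map (algebraMap Fq R) with hF
    set G : Polynomial R := Polynomial.C u *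
      ∏ k ∈ Finset.range d, (Polynomial.X -
        Polynomial.C (MvPolynomial.C (RatFunc.X ^ (Fintype.card Fq) ^ k) : R)) with hG
    have hSdU' : ∑ c : Fin d → Fq, ((∏ i ∈ U', atT Fq i (monicPoly Fq d c)) *
        MvPolynomial.C ((AtoK Fq (monicPoly Fq d c))⁻¹)) = SdU Fq U' 1 d := by
      rw [SdU]
      refine Finset.sum_congr rfl fun c _ => ?_
      rw [zpow_neg, zpow_one]
    have hPmonic : (∏ k ∈ Finset.range d, (Polynomial.X -
        Polynomial.C (MvPolynomial.C (RatFunc.X ^ (Fintype.card Fq) ^ k) : R))).Monic :=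
      Polynomial.monic_prod_of_monic _ _ fun k _ => Polynomial.monic_X_sub_C _
    have hPdeg : (∏ k ∈ Finset.range d, (Polynomial.X -
        Polynomial.C (MvPolynomial.C (RatFunc.X ^ (Fintype.card Fq) ^ k) : R))).natDegree
        = d := by
      rw [Polynomial.natDegree_prod _ _ (fun k _ => (Polynomial.monic_X_sub_C _).ne_zero)]
      have h7 : ∀ k ∈ Finset.range d, (Polynomial.X -
          Polynomial.C (MvPolynomial.C (RatFunc.X ^ (Fintype.card Fq) ^ k) : R)).natDegree
          = 1 := fun k _ => Polynomial.natDegree_X_sub_C _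
      rw [Finset.sum_congr rfl h7, Finset.sum_const, Finset.card_range, smul_eq_mul, mul_one]
    have hFcoeff_gt : ∀ m, d < m → F.coeff m = 0 := by
      intro m hm
      rw [hF, Polynomial.finset_sum_coeff]
      refine Finset.sum_eq_zero fun c _ => ?_
      rw [Polynomial.coeff_C_mul, Polynomial.coeff_map, monicPoly_coeff Fq d c (le_of_lt hm),
        if_neg (by omega), map_zero, mul_zero]
    have hFcoeff_d : F.coeff d = SdU Fq U' 1 d := by
      rw [hF, Polynomial.finset_sum_coeff, ← hSdU']
      refine Finset.sum_congr rfl fun c _ => ?_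
      rw [Polynomial.coeff_C_mul, Polynomial.coeff_map, monicPoly_coeff Fq d c le_rfl,
        if_pos rfl, map_one, mul_one]
    have hGcoeff_gt : ∀ m, d < m → G.coeff m = 0 := by
      intro m hm
      rw [hG, Polynomial.coeff_C_mul,
        Polynomial.coeff_eq_zero_of_natDegree_lt (by rw [hPdeg]; exact hm), mul_zero]
    have hGcoeff_d : G.coeff d = u := by
      rw [hG, Polynomial.coeff_C_mul]
      have h6 := hPmonic.coeff_natDegree
      rw [hPdeg] at h6
      rw [h6, mul_one]
    have hdeg : (F - G).degree < (d : ℕ) := by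
      rw [Polynomial.degree_lt_iff_coeff_zero]
      intro m hm
      rw [Polynomial.coeff_sub]
      rcases eq_or_lt_of_le hm with rfl | hlt
      · rw [hFcoeff_d, hGcoeff_d, ihU, sub_self]
      · rw [hFcoeff_gt m hlt, hGcoeff_gt m hlt, sub_self]
    have hroot : ∀ k : Fin d, (F - G).eval
        ((MvPolynomial.C (RatFunc.X ^ (Fintype.card Fq) ^ (k : ℕ))) : R) = 0 := by
      intro k
      rw [Polynomial.eval_sub]
      have hGe : G.eval ((MvPolynomial.C (RatFunc.X ^ (Fintype.card Fq) ^ (k : ℕ))) : R)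
          = 0 := by
        rw [hG, Polynomial.eval_mul, Polynomial.eval_prod]
        refine mul_eq_zero_of_right _ (Finset.prod_eq_zero (Finset.mem_range.mpr k.isLt) ?_)
        rw [Polynomial.eval_sub, Polynomial.eval_X, Polynomial.eval_C, sub_self]
      have hFe : F.eval ((MvPolynomial.C (RatFunc.X ^ (Fintype.card Fq) ^ (k : ℕ))) : R)
          = 0 := by
        rw [hF, Polynomial.eval_finset_sum]
        have hterm : ∀ c : Fin d → Fq,
            Polynomial.eval ((MvPolynomial.C (RatFunc.X ^ (Fintype.card Fq) ^ (k : ℕ))) : R)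
              (Polynomial.C ((∏ i ∈ U', atT Fq i (monicPoly Fq d c)) *
                MvPolynomial.C ((AtoK Fq (monicPoly Fq d c))⁻¹)) *
                (monicPoly Fq d c).map (algebraMap Fq R))
            = (∏ i ∈ U', atT Fq i (monicPoly Fq d c)) *
                MvPolynomial.C ((AtoK Fq (monicPoly Fq d c))
                  ^ ((Fintype.card Fq) ^ (k : ℕ) - 1)) := by
          intro c
          rw [Polynomial.eval_mul, Polynomial.eval_C, aux_eval_map, mul_assoc, ← map_mul]
          have ha := AtoK_monicPoly_ne_zero Fq d c
          have hq1 : 1 ≤ (Fintype.card Fq) ^ (k : ℕ) := Nat.one_le_pow _ _ (by omega)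
          have hpow : ∀ (y : RatFunc Fq), y ≠ 0 → ∀ n : ℕ, 1 ≤ n →
              y⁻¹ * y ^ n = y ^ (n - 1) := by
            intro y hy n hn
            obtain ⟨m, rfl⟩ : ∃ m, n = m + 1 := ⟨n - 1, by omega⟩
            rw [pow_succ', inv_mul_cancel_left₀ hy, Nat.add_sub_cancel]
          rw [hpow _ ha _ hq1]
        rw [Finset.sum_congr rfl fun c _ => hterm c]
        exact aux_vanishing Fq d (k : ℕ) k.isLt U' hU'q1
      rw [hFe, hGe, sub_self]
    have hinj : Function.Injective (fun k : Fin d =>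
        ((MvPolynomial.C (RatFunc.X ^ (Fintype.card Fq) ^ (k : ℕ))) : R)) := by
      intro k1 k2 h
      have h2 := MvPolynomial.C_injective ℕ (RatFunc Fq) h
      have h3 := theta_pow_injective Fq h2
      have h4 := Nat.pow_right_injective hq h3
      exact Fin.ext h4
    have hFG : F = G := sub_eq_zero.mp (aux_poly_zero _ d hdeg _ hinj hroot)
    -- evaluate at `X i₀`
    have hLterm : ∀ c : Fin d → Fq,
        Polynomial.eval (MvPolynomial.X i₀ : R)
          (Polynomial.C ((∏ i ∈ U', atT Fq i (monicPoly Fq d c)) *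
            MvPolynomial.C ((AtoK Fq (monicPoly Fq d c))⁻¹)) *
            (monicPoly Fq d c).map (algebraMap Fq R))
        = (∏ i ∈ insert i₀ U', atT Fq i (monicPoly Fq d c)) *
            MvPolynomial.C ((AtoK Fq (monicPoly Fq d c)) ^ (-(1 : ℤ))) := by
      intro c
      rw [Polynomial.eval_mul, Polynomial.eval_C, aux_eval_map_X,
        Finset.prod_insert hni, zpow_neg, zpow_one]
      ring
    have hRprod : Polynomial.eval (MvPolynomial.X i₀ : R)
        (∏ k ∈ Finset.range d, (Polynomial.X -
          Polynomial.C (MvPolynomial.C (RatFunc.X ^ (Fintype.card Fq) ^ k) : R)))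
        = bMv Fq d i₀ := by
      rw [Polynomial.eval_prod, bMv]
      refine Finset.prod_congr rfl fun k _ => ?_
      rw [Polynomial.eval_sub, Polynomial.eval_X, Polynomial.eval_C]
    rw [SdU]
    have h5 : ∑ c : Fin d → Fq, (∏ i ∈ insert i₀ U', atT Fq i (monicPoly Fq d c)) *
        MvPolynomial.C ((AtoK Fq (monicPoly Fq d c)) ^ (-(1 : ℤ)))
        = Polynomial.eval (MvPolynomial.X i₀ : R) F := by
      rw [hF, Polynomial.eval_finset_sum]
      exact Finset.sum_congr rfl fun c _ => (hLterm c).symm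
    rw [h5, hFG, hG, Polynomial.eval_mul, Polynomial.eval_C, hRprod,
      Finset.prod_insert hni, hu]
    ring

end PaperMZV
end
end
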